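/- arXiv:1704.07871 — 2 statements merged into one kernel-verified Lean document; each statement's English description precedes it below -/
import Mathlib

section
/- Let μ be a Borel probability measure on ℝ with finite r-th moment for some r ≥ 1, and suppose μ is not a Dirac mass. For each n, let e_n = inf over all x_1 ≤ … ≤ x_n of d_r((1/n)Σ_{i=1}^n δ_{x_i}, μ). Then limsup_{n→∞} n·e_n > 0; in fact limsup_{n→∞} n·e_n ≥ ½ ∫_0^{1/2} (F_μ⁻¹(t + 1/2) − F_μ⁻¹(t)) dt. -/
set_option linter.unusedVariables false
set_option linter.unusedSectionVars false
set_option maxHeartbeats 1000000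

open Set MeasureTheory Filter
open scoped ENNReal

/-- The distribution function of a measure on `ℝ`. -/
noncomputable def cdf (μ : Measure ℝ) (x : ℝ) : ℝ := (μ (Set.Iic x)).toReal

/-- The (upper) quantile function `F_μ⁻¹(t) = sup {x : F_μ(x) ≤ t}`. -/
noncomputable def quantile (μ : Measure ℝ) (t : ℝ) : ℝ := sSup {x : ℝ | cdf μ x ≤ t}

/-- The discrete measure `(1/n) ∑_{i=1}^n δ_{y_i}`. -/
noncomputable def unifAtoms (n : ℕ) (y : Fin n → ℝ) : Measure ℝ :=
  (n : ℝ≥0∞)⁻¹ • ∑ i, Measure.dirac (y i)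

/-- The `L^r`-Kantorovich distance, expressed via quantile functions. -/
noncomputable def drE (r : ℝ) (μ ν : Measure ℝ) : ℝ≥0∞ :=
  (∫⁻ t in Set.Ioo (0 : ℝ) 1, ENNReal.ofReal |quantile μ t - quantile ν t| ^ r) ^ (1 / r)

noncomputable def tent (y : ℝ) : ℝ := 1 - 2 * |Int.fract y - 2⁻¹|

lemma abs_fract_half_le (y : ℝ) : |Int.fract y - 2⁻¹| ≤ 2⁻¹ := by
  have h1 := Int.fract_nonneg y
  have h2 := Int.fract_lt_one y
  rw [abs_le]; constructor <;> linarith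

lemma tent_nonneg (y : ℝ) : 0 ≤ tent y := by
  have := abs_fract_half_le y; unfold tent; linarith

lemma tent_le_one (y : ℝ) : tent y ≤ 1 := by
  have := abs_nonneg (Int.fract y - 2⁻¹); unfold tent; linarith

lemma tent_le_two_fract (y : ℝ) : tent y ≤ 2 * Int.fract y := by
  have := neg_abs_le (Int.fract y - 2⁻¹); unfold tent; linarith

lemma tent_le_two_one_sub_fract (y : ℝ) : tent y ≤ 2 * (1 - Int.fract y) := by
  have := le_abs_self (Int.fract y - 2⁻¹); unfold tent; linarith

/-- distance of `fract a` to 1/2 is the distance of `a` to `ℤ + 1/2`. -/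
lemma abs_fract_half_min (a : ℝ) (m : ℤ) : |Int.fract a - 2⁻¹| ≤ |a - (m + 2⁻¹)| := by
  have hfr : Int.fract a = a - ⌊a⌋ := Int.self_sub_floor a ▸ rfl
  set u : ℝ := Int.fract a - 2⁻¹ with hu
  have key : a - (m + 2⁻¹) = u + ((⌊a⌋ : ℤ) - m : ℤ) := by
    push_cast [hu, hfr]; ring
  rw [key]
  rcases eq_or_ne ((⌊a⌋ : ℤ) - m) 0 with h0 | h0
  · rw [h0]; simp
  · have h1 : (1 : ℝ) ≤ |(((⌊a⌋ : ℤ) - m : ℤ) : ℝ)| := by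
      have := Int.one_le_abs h0
      push_cast
      exact_mod_cast this
    have hu2 : |u| ≤ 2⁻¹ := abs_fract_half_le a
    have h3 : |(((⌊a⌋ : ℤ) - m : ℤ) : ℝ)| - |u| ≤ |u + (((⌊a⌋ : ℤ) - m : ℤ) : ℝ)| := by
      have h4 : |u + (((⌊a⌋ : ℤ) - m : ℤ) : ℝ) - u| ≤ |u + (((⌊a⌋ : ℤ) - m : ℤ) : ℝ)| + |u| :=
        abs_sub _ _
      have h5 : u + (((⌊a⌋ : ℤ) - m : ℤ) : ℝ) - u = (((⌊a⌋ : ℤ) - m : ℤ) : ℝ) := by ring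
      rw [h5] at h4
      linarith
    linarith

lemma tent_lip (a b : ℝ) : tent b - 2 * |a - b| ≤ tent a := by
  have h1 : |Int.fract a - 2⁻¹| ≤ |a - (⌊b⌋ + 2⁻¹)| := abs_fract_half_min a ⌊b⌋
  have h2 : |a - (⌊b⌋ + 2⁻¹)| ≤ |a - b| + |b - (⌊b⌋ + 2⁻¹)| := by
    have := abs_add_le (a - b) (b - (⌊b⌋ + 2⁻¹)); rw [show a - (⌊b⌋ + 2⁻¹) = (a - b) + (b - (⌊b⌋ + 2⁻¹)) by ring]; exact this
  have h3 : |b - ((⌊b⌋ : ℝ) + 2⁻¹)| = |Int.fract b - 2⁻¹| := by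
    rw [show b - ((⌊b⌋ : ℝ) + 2⁻¹) = Int.fract b - 2⁻¹ by rw [Int.fract]; ring]
  unfold tent; rw [h3] at h2; linarith

lemma fract_add_half (y : ℝ) : |Int.fract (y + 2⁻¹) - 2⁻¹| = 2⁻¹ - |Int.fract y - 2⁻¹| := by
  have key : Int.fract (y + 2⁻¹) = Int.fract (Int.fract y + 2⁻¹) := by
    conv_lhs => rw [show y + 2⁻¹ = (⌊y⌋ : ℝ) + (Int.fract y + 2⁻¹) by rw [Int.fract]; ring]
    rw [Int.fract_intCast_add]
  have h1 := Int.fract_nonneg y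
  have h2 := Int.fract_lt_one y
  rcases lt_or_ge (Int.fract y) 2⁻¹ with h | h
  · have : Int.fract (Int.fract y + 2⁻¹) = Int.fract y + 2⁻¹ :=
      Int.fract_eq_self.2 ⟨by linarith, by linarith⟩
    rw [key, this]
    rw [abs_of_nonneg (by linarith), abs_of_nonpos (by linarith)]; ring
  · have : Int.fract (Int.fract y + 2⁻¹) = Int.fract y - 2⁻¹ := by
      rw [show Int.fract y + 2⁻¹ = (1 : ℤ) + (Int.fract y - 2⁻¹) by push_cast; ring,
        Int.fract_intCast_add]
      exact Int.fract_eq_self.2 ⟨by linarith, by linarith⟩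
    rw [key, this]
    rw [abs_of_nonpos (by linarith), abs_of_nonneg (by linarith)]; ring

lemma tent_add_half (y : ℝ) : tent (y + 2⁻¹) = 1 - tent y := by
  unfold tent; rw [fract_add_half]; ring

lemma tent_pair (x z : ℝ) : 2 * min x (1 - x) ≤ tent z + tent (z + x) := by
  have h1 : tent (z + 2⁻¹) - 2 * |z + x - (z + 2⁻¹)| ≤ tent (z + x) := tent_lip (z + x) (z + 2⁻¹)
  rw [tent_add_half] at h1
  have h2 : |z + x - (z + 2⁻¹)| = |x - 2⁻¹| := by ring_nf
  rw [h2] at h1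
  have h3 : 2 * min x (1 - x) = 1 - 2 * |x - 2⁻¹| := by
    rcases le_total x 2⁻¹ with h | h
    · rw [min_eq_left (by linarith), abs_of_nonpos (by linarith)]; ring
    · rw [min_eq_right (by linarith), abs_of_nonneg (by linarith)]; ring
  linarith

lemma tent_sum_aux (x : ℝ) (M : ℕ) : ∀ N, M ≤ N →
    (N - M : ℝ) * (2 * min x (1 - x)) + tent ((M + 1) * x) - tent ((N + 1) * x)
      ≤ 2 * ∑ n ∈ Finset.Ioc M N, tent (n * x) := by
  intro N
  induction N with
  | zero => intro h; interval_cases M; simp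
  | succ N ih =>
    intro h
    rcases Nat.lt_or_ge M (N + 1) with hlt | hge
    · have hMN : M ≤ N := by omega
      rw [Finset.sum_Ioc_succ_top hMN]
      have := ih hMN
      have hp : 2 * min x (1 - x) ≤ tent ((N + 1) * x) + tent ((N + 1) * x + x) :=
        tent_pair x ((N + 1) * x)
      have harg : ((N : ℝ) + 1) * x + x = ((N + 1 : ℕ) + 1 : ℝ) * x := by push_cast; ring
      rw [harg] at hp
      push_cast
      push_cast at this hp
      linarith
    · have : M = N + 1 := by omega
      subst this; simp

lemma tent_sum_Ioc (x : ℝ) (M N : ℕ) (h : M ≤ N) :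
    (N - M : ℝ) * min x (1 - x) - 2⁻¹ ≤ ∑ n ∈ Finset.Ioc M N, tent (n * x) := by
  have := tent_sum_aux x M N h
  have h1 := tent_le_one ((M + 1) * x)
  have h2 := tent_nonneg ((N + 1) * x)
  have h3 := tent_nonneg ((M + 1) * x)
  have h5 := tent_le_one ((N + 1) * x)
  have h4 : (↑N - ↑M : ℝ) * (2 * min x (1 - x)) = 2 * ((↑N - ↑M : ℝ) * min x (1 - x)) := by ring
  linarith

section Quantile
variable {μ : Measure ℝ} [IsProbabilityMeasure μ]

lemma cdf_eq_prob (x : ℝ) : cdf μ x = ProbabilityTheory.cdf μ x :=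
  by rw [cdf, ProbabilityTheory.cdf_eq_real, measureReal_def]

lemma cdf_mono : Monotone (cdf μ) := fun a b h =>
  ENNReal.toReal_mono (measure_ne_top _ _) (measure_mono (Iic_subset_Iic.2 h))

lemma cdf_nonneg (x : ℝ) : 0 ≤ cdf μ x := ENNReal.toReal_nonneg

lemma cdf_le_one (x : ℝ) : cdf μ x ≤ 1 := by
  have h : μ (Iic x) ≤ 1 := prob_le_one
  simpa [cdf] using ENNReal.toReal_mono (by simp) h

lemma quantile_set_nonempty {t : ℝ} (ht : 0 < t) : {x : ℝ | cdf μ x ≤ t}.Nonempty := by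
  have h := ProbabilityTheory.tendsto_cdf_atBot (μ := μ)
  have h2 : ∀ᶠ x in atBot, ProbabilityTheory.cdf μ x < t :=
    h.eventually_lt_const ht
  obtain ⟨x, hx⟩ := h2.exists
  exact ⟨x, by rw [mem_setOf_eq, cdf_eq_prob]; exact hx.le⟩

lemma quantile_set_bddAbove {t : ℝ} (ht : t < 1) : BddAbove {x : ℝ | cdf μ x ≤ t} := by
  have h := ProbabilityTheory.tendsto_cdf_atTop (μ := μ)
  have h2 : ∀ᶠ x in atTop, t < ProbabilityTheory.cdf μ x :=
    h.eventually_const_lt ht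
  obtain ⟨x0, hx0⟩ := h2.exists
  refine ⟨x0, fun x hx => ?_⟩
  by_contra hc
  push_neg at hc
  have : ProbabilityTheory.cdf μ x0 ≤ cdf μ x := by
    rw [cdf_eq_prob]; exact (ProbabilityTheory.monotone_cdf μ) hc.le
  rw [mem_setOf_eq] at hx
  linarith

lemma quantile_mono {t₁ t₂ : ℝ} (h0 : 0 < t₁) (h12 : t₁ ≤ t₂) (h1 : t₂ < 1) :
    quantile μ t₁ ≤ quantile μ t₂ :=
  csSup_le_csSup (quantile_set_bddAbove h1) (quantile_set_nonempty h0)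
    (fun _ hx => le_trans hx h12)

lemma quantile_monotoneOn : MonotoneOn (quantile μ) (Ioo (0:ℝ) 1) :=
  fun _ ha _ hb hab => quantile_mono ha.1 hab hb.2

/-- if `x < quantile μ t` then `cdf μ x ≤ t`. -/
lemma cdf_le_of_lt_quantile {t x : ℝ} (h0 : 0 < t) (h1 : t < 1)
    (hx : x < quantile μ t) : cdf μ x ≤ t := by
  obtain ⟨d, hd, hxd⟩ := exists_lt_of_lt_csSup (quantile_set_nonempty h0) hx
  exact le_trans (cdf_mono hxd.le) hd

/-- if `cdf μ x ≤ t` then `x ≤ quantile μ t`. -/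
lemma le_quantile_of_cdf_le {t x : ℝ} (h1 : t < 1) (hx : cdf μ x ≤ t) :
    x ≤ quantile μ t :=
  le_csSup (quantile_set_bddAbove h1) hx

end Quantile

section Tau
variable (μ : Measure ℝ)

/-- `τ s` is the Lebesgue measure of `{t ∈ (0,1) : quantile μ t ≤ s}`. -/
noncomputable def tau (s : ℝ) : ℝ :=
  (volume {t : ℝ | t ∈ Ioo (0:ℝ) 1 ∧ quantile μ t ≤ s}).toReal

variable {μ}

lemma tau_vol_ne_top (s : ℝ) :
    volume {t : ℝ | t ∈ Ioo (0:ℝ) 1 ∧ quantile μ t ≤ s} ≠ ⊤ := by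
  refine ne_top_of_le_ne_top ?_ (measure_mono (fun t ht => ht.1))
  simp [Real.volume_Ioo]

lemma tau_mono : Monotone (tau μ) := by
  intro a b hab
  exact ENNReal.toReal_mono (tau_vol_ne_top b)
    (measure_mono (fun t ht => ⟨ht.1, le_trans ht.2 hab⟩))

lemma tau_measurable : Measurable (tau μ) := Monotone.measurable tau_mono

lemma tau_nonneg (s : ℝ) : 0 ≤ tau μ s := ENNReal.toReal_nonneg

lemma tau_le_one (s : ℝ) : tau μ s ≤ 1 := by
  have h : volume {t : ℝ | t ∈ Ioo (0:ℝ) 1 ∧ quantile μ t ≤ s} ≤ volume (Ioo (0:ℝ) 1) :=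
    measure_mono (fun t ht => ht.1)
  rw [Real.volume_Ioo] at h
  calc tau μ s ≤ (ENNReal.ofReal (1 - 0)).toReal :=
        ENNReal.toReal_mono (by simp) h
    _ = 1 := by simp

variable [IsProbabilityMeasure μ]

/-- If `a < τ s` and `a ∈ (0,1)` then `quantile μ a ≤ s`. -/
lemma quantile_le_of_lt_tau {a s : ℝ} (ha : a ∈ Ioo (0:ℝ) 1) (h : a < tau μ s) :
    quantile μ a ≤ s := by
  by_contra hc
  push_neg at hc
  have hsub : {t : ℝ | t ∈ Ioo (0:ℝ) 1 ∧ quantile μ t ≤ s} ⊆ Ioo 0 a := by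
    intro t ht
    refine ⟨ht.1.1, ?_⟩
    by_contra hta
    push_neg at hta
    have : quantile μ a ≤ quantile μ t := quantile_monotoneOn ha ht.1 hta
    linarith [ht.2]
  have hne : volume (Ioo (0:ℝ) a) ≠ ⊤ := by simp [Real.volume_Ioo]
  have := ENNReal.toReal_mono hne (measure_mono hsub)
  rw [Real.volume_Ioo, ENNReal.toReal_ofReal (by linarith [ha.1.le] : (0:ℝ) ≤ a - 0)] at this
  unfold tau at h
  linarith

/-- If `τ s < b` and `b ∈ (0,1)` then `s < quantile μ b`. -/
lemma lt_quantile_of_tau_lt {b s : ℝ} (hb : b ∈ Ioo (0:ℝ) 1) (h : tau μ s < b) :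
    s < quantile μ b := by
  by_contra hc
  push_neg at hc
  have hsub : Ioc (0:ℝ) b ⊆ {t : ℝ | t ∈ Ioo (0:ℝ) 1 ∧ quantile μ t ≤ s} := by
    intro t ht
    have ht1 : t ∈ Ioo (0:ℝ) 1 := ⟨ht.1, lt_of_le_of_lt ht.2 hb.2⟩
    exact ⟨ht1, le_trans (quantile_monotoneOn ht1 hb ht.2) hc⟩
  have := ENNReal.toReal_mono (tau_vol_ne_top s) (measure_mono hsub)
  rw [Real.volume_Ioc, ENNReal.toReal_ofReal (by linarith [hb.1.le] : (0:ℝ) ≤ b - 0)] at this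
  unfold tau at h
  linarith

/-- If `quantile μ t ≤ s` with `t ∈ (0,1)` then `t ≤ τ s`. -/
lemma le_tau_of_quantile_le {t s : ℝ} (ht : t ∈ Ioo (0:ℝ) 1) (h : quantile μ t ≤ s) :
    t ≤ tau μ s := by
  have hsub : Ioc (0:ℝ) t ⊆ {u : ℝ | u ∈ Ioo (0:ℝ) 1 ∧ quantile μ u ≤ s} := by
    intro u hu
    have hu1 : u ∈ Ioo (0:ℝ) 1 := ⟨hu.1, lt_of_le_of_lt hu.2 ht.2⟩
    exact ⟨hu1, le_trans (quantile_monotoneOn hu1 ht hu.2) h⟩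
  have := ENNReal.toReal_mono (tau_vol_ne_top s) (measure_mono hsub)
  rw [Real.volume_Ioc, ENNReal.toReal_ofReal (by linarith [ht.1.le] : (0:ℝ) ≤ t - 0)] at this
  unfold tau
  linarith

/-- If `s < quantile μ t` with `t ∈ (0,1)` then `τ s ≤ t`. -/
lemma tau_le_of_lt_quantile {t s : ℝ} (ht : t ∈ Ioo (0:ℝ) 1) (h : s < quantile μ t) :
    tau μ s ≤ t := by
  by_contra hc
  push_neg at hc
  exact absurd (quantile_le_of_lt_tau ht hc) (not_le.2 h)

end Tau

section Atoms
variable {n : ℕ} {y : Fin n → ℝ}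

lemma unifAtoms_Iic (x : ℝ) :
    unifAtoms n y (Iic x) =
      (n : ℝ≥0∞)⁻¹ * ((Finset.univ.filter (fun i => y i ≤ x)).card : ℝ≥0∞) := by
  rw [unifAtoms, Measure.smul_apply, smul_eq_mul]
  congr 1
  rw [Measure.finset_sum_apply]
  have : ∀ i : Fin n, Measure.dirac (y i) (Iic x) = if y i ≤ x then (1:ℝ≥0∞) else 0 := by
    intro i
    rw [Measure.dirac_apply' _ measurableSet_Iic]
    by_cases h : y i ≤ x <;> simp [Set.indicator, h]
  simp_rw [this]
  rw [Finset.sum_boole]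

lemma cdf_unifAtoms (hn : 0 < n) (x : ℝ) :
    cdf (unifAtoms n y) x = ((Finset.univ.filter (fun i => y i ≤ x)).card : ℝ) / n := by
  rw [cdf, unifAtoms_Iic]
  rw [ENNReal.toReal_mul, ENNReal.toReal_inv]
  simp [div_eq_inv_mul]

lemma count_le_iff (hy : Monotone y) {k : ℕ} (hk : k < n) (x : ℝ) :
    (Finset.univ.filter (fun i => y i ≤ x)).card ≤ k ↔ x < y ⟨k, hk⟩ := by
  constructor
  · intro h
    by_contra hc
    push_neg at hc
    have hsub : ∀ j : Fin (k+1), (⟨j.1, lt_of_lt_of_le j.2 hk⟩ : Fin n) ∈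
        Finset.univ.filter (fun i => y i ≤ x) := by
      intro j
      simp only [Finset.mem_filter, Finset.mem_univ, true_and]
      calc y ⟨j.1, _⟩ ≤ y ⟨k, hk⟩ := hy (by simp [Fin.le_def]; omega)
        _ ≤ x := hc
    have hcard : k + 1 ≤ (Finset.univ.filter (fun i => y i ≤ x)).card := by
      have := Finset.card_le_card_of_injOn (s := (Finset.univ : Finset (Fin (k+1))))
        (fun j : Fin (k+1) => (⟨j.1, lt_of_lt_of_le j.2 hk⟩ : Fin n))
        (fun j _ => hsub j)
        (fun a _ b _ hab => by
          simp only [Fin.mk.injEq] at hab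
          exact Fin.ext hab)
      simpa using this
    omega
  · intro h
    have := Finset.card_le_card_of_injOn (t := Finset.range k)
      (s := Finset.univ.filter (fun i => y i ≤ x))
      (fun i : Fin n => (i : ℕ))
      (fun i hi => by
        simp only [Finset.coe_filter, Finset.mem_univ, true_and, Set.mem_setOf_eq] at hi
        rw [Finset.mem_coe, Finset.mem_range]
        by_contra hik
        push_neg at hik
        have : y ⟨k, hk⟩ ≤ y i := hy (by rw [Fin.le_def, Fin.val_mk]; omega)
        linarith)
      (fun a _ b _ hab => Fin.ext hab)
    simpa using this

lemma quantile_unifAtoms (hy : Monotone y) {k : ℕ} (hk : k < n) {t : ℝ}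
    (h1 : (k : ℝ) ≤ n * t) (h2 : n * t < k + 1) :
    quantile (unifAtoms n y) t = y ⟨k, hk⟩ := by
  have hn : 0 < n := lt_of_le_of_lt (Nat.zero_le k) hk
  have hset : {x : ℝ | cdf (unifAtoms n y) x ≤ t} = Iio (y ⟨k, hk⟩) := by
    ext x
    rw [mem_setOf_eq, cdf_unifAtoms hn, mem_Iio]
    rw [div_le_iff₀ (by exact_mod_cast hn)]
    constructor
    · intro h
      rw [← count_le_iff hy hk x]
      by_contra hc
      push_neg at hc
      have : (k:ℝ) + 1 ≤ ((Finset.univ.filter (fun i => y i ≤ x)).card : ℝ) := by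
        exact_mod_cast hc
      nlinarith [mul_comm t (n:ℝ)]
    · intro h
      have := (count_le_iff hy hk x).2 h
      have : ((Finset.univ.filter (fun i => y i ≤ x)).card : ℝ) ≤ k := by exact_mod_cast this
      nlinarith [mul_comm t (n:ℝ)]
  rw [quantile, hset, csSup_Iio]

end Atoms

section Geo
open Set MeasureTheory Filter
open scoped ENNReal

/-- key geometric bound: the tent function bounds the overlap of the even-block
pattern with a sliding window. -/
lemma tentLB {n : ℕ} (hn : 0 < n) {x : ℝ} (hx : x ∈ Icc (0:ℝ) 1) :
    ENNReal.ofReal (tent ((n:ℝ) * x)) ≤ ENNReal.ofReal (2*(n:ℝ)) *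
      volume ((⋃ k ∈ Finset.range n,
          Ioo ((2*k:ℕ) * (2*(n:ℝ))⁻¹) ((2*k:ℕ) * (2*(n:ℝ))⁻¹ + (2*(n:ℝ))⁻¹)) ∩
        Ioo (x - (2*(n:ℝ))⁻¹) x) := by
  have hnpos : (0:ℝ) < (n:ℝ) := by exact_mod_cast hn
  obtain ⟨d, hd⟩ : ∃ d : ℝ, d = (2*(n:ℝ))⁻¹ := ⟨_, rfl⟩
  rw [← hd]
  have hdpos : 0 < d := by rw [hd]; positivity
  have hnd : (n:ℝ) * d = 2⁻¹ := by
    rw [hd]; field_simp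
  rcases le_or_gt (tent ((n:ℝ) * x)) 0 with h0 | h0
  · rw [ENNReal.ofReal_eq_zero.2 h0]; exact zero_le
  set u : ℝ := Int.fract ((n:ℝ) * x) with hu
  have hupos : 0 < u := by
    have := tent_le_two_fract ((n:ℝ) * x)
    rw [← hu] at this; linarith
  have hule : u < 1 := by rw [hu]; exact Int.fract_lt_one _
  set k0 : ℕ := ⌊(n:ℝ) * x⌋₊ with hk0
  have hxnn : 0 ≤ (n:ℝ) * x := mul_nonneg hnpos.le hx.1
  have hk0le : (k0:ℝ) ≤ (n:ℝ) * x := Nat.floor_le hxnn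
  have hlt1 : (n:ℝ) * x < (k0:ℝ) + 1 := by
    have := Nat.lt_floor_add_one ((n:ℝ) * x)
    rw [← hk0] at this
    exact_mod_cast this
  have hufr : u = (n:ℝ) * x - k0 := by
    have h2 : Int.fract ((n:ℝ) * x - ((k0:ℤ):ℝ)) = Int.fract ((n:ℝ)*x) :=
      Int.fract_sub_intCast _ _
    have h3 : ((k0:ℤ):ℝ) = (k0:ℝ) := by push_cast; ring
    rw [h3] at h2
    rw [hu, ← h2, Int.fract_eq_self.2 ⟨by linarith, by linarith⟩]
  have hx2 : (n:ℝ) * x = (k0:ℝ) + u := by linarith [hufr]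
  have hknd : (k0:ℝ) * ((n:ℝ) * d) = (k0:ℝ) * 2⁻¹ := by rw [hnd]
  have hk0lt : k0 < n := by
    by_contra hc
    push_neg at hc
    have h2 : (n:ℝ) ≤ (k0:ℝ) := by exact_mod_cast hc
    nlinarith [hx.2]
  have hmem : (Ioo ((2*k0:ℕ) * d) ((2*k0:ℕ) * d + d) : Set ℝ) ⊆
      ⋃ k ∈ Finset.range n, Ioo ((2*k:ℕ) * d) ((2*k:ℕ) * d + d) := by
    intro z hz
    exact mem_biUnion (Finset.mem_range.2 hk0lt) hz
  have hcast : ((2*k0:ℕ):ℝ) = 2*(k0:ℝ) := by push_cast; ring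
  have hmul : ∀ {a b : ℝ}, (n:ℝ)*a ≤ (n:ℝ)*b → a ≤ b :=
    fun h => le_of_mul_le_mul_left h hnpos
  rcases le_or_gt u 2⁻¹ with hc | hc
  · have hxle : x ≤ 2*(k0:ℝ)*d + d := hmul (by nlinarith [hknd, hnd, hx2])
    have hge : x - d ≤ 2*(k0:ℝ)*d := hmul (by nlinarith [hknd, hnd, hx2])
    have hsub : Ioo (2*(k0:ℝ)*d) x ⊆ (⋃ k ∈ Finset.range n,
        Ioo ((2*k:ℕ) * d) ((2*k:ℕ) * d + d)) ∩ Ioo (x - d) x := by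
      intro z hz
      refine ⟨hmem ?_, ⟨by linarith [hz.1], hz.2⟩⟩
      rw [hcast]
      exact ⟨hz.1, by linarith [hz.2]⟩
    calc ENNReal.ofReal (tent ((n:ℝ) * x)) ≤ ENNReal.ofReal (2 * u) := by
          apply ENNReal.ofReal_le_ofReal
          have := tent_le_two_fract ((n:ℝ) * x); rw [← hu] at this; exact this
      _ = ENNReal.ofReal (2*(n:ℝ)) * ENNReal.ofReal (x - 2*(k0:ℝ)*d) := by
          rw [← ENNReal.ofReal_mul (by positivity)]
          congr 1
          linear_combination (-2:ℝ) * hx2 + 4 * hknd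
      _ ≤ _ := by
          apply mul_le_mul_right
          rw [← Real.volume_Ioo]
          exact measure_mono hsub
  · have hlow : 2*(k0:ℝ)*d ≤ x - d := hmul (by nlinarith [hknd, hnd, hx2])
    have hhi : 2*(k0:ℝ)*d + d ≤ x := hmul (by nlinarith [hknd, hnd, hx2])
    have hsub : Ioo (x - d) (2*(k0:ℝ)*d + d) ⊆ (⋃ k ∈ Finset.range n,
        Ioo ((2*k:ℕ) * d) ((2*k:ℕ) * d + d)) ∩ Ioo (x - d) x := by
      intro z hz
      refine ⟨hmem ?_, ⟨hz.1, by linarith [hz.2]⟩⟩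
      rw [hcast]
      exact ⟨by linarith [hz.1], hz.2⟩
    calc ENNReal.ofReal (tent ((n:ℝ) * x)) ≤ ENNReal.ofReal (2 * (1 - u)) := by
          apply ENNReal.ofReal_le_ofReal
          have := tent_le_two_one_sub_fract ((n:ℝ) * x); rw [← hu] at this; exact this
      _ = ENNReal.ofReal (2*(n:ℝ)) * ENNReal.ofReal (2*(k0:ℝ)*d + d - (x - d)) := by
          rw [← ENNReal.ofReal_mul (by positivity)]
          congr 1
          linear_combination (2:ℝ) * hx2 - 4 * hknd - 4 * hnd
      _ ≤ _ := by
          apply mul_le_mul_right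
          rw [← Real.volume_Ioo]
          exact measure_mono hsub

lemma volA {x : ℝ} (hx : x ∈ Icc (0:ℝ) 1) :
    volume (Ioo (0:ℝ) 2⁻¹ ∩ Icc (x - 2⁻¹) x) ≤ ENNReal.ofReal (min x (1 - x)) := by
  rcases le_or_gt x 2⁻¹ with h | h
  · have hsub : Ioo (0:ℝ) 2⁻¹ ∩ Icc (x - 2⁻¹) x ⊆ Icc 0 x :=
      fun z hz => ⟨hz.1.1.le, hz.2.2⟩
    calc volume _ ≤ volume (Icc (0:ℝ) x) := measure_mono hsub
      _ = ENNReal.ofReal (x - 0) := Real.volume_Icc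
      _ ≤ _ := ENNReal.ofReal_le_ofReal (by
          rw [min_def]
          split <;> linarith [hx.1, hx.2])
  · have hsub : Ioo (0:ℝ) 2⁻¹ ∩ Icc (x - 2⁻¹) x ⊆ Icc (x - 2⁻¹) 2⁻¹ :=
      fun z hz => ⟨hz.2.1, hz.1.2.le⟩
    calc volume _ ≤ volume (Icc (x - 2⁻¹) 2⁻¹) := measure_mono hsub
      _ = ENNReal.ofReal (2⁻¹ - (x - 2⁻¹)) := Real.volume_Icc
      _ ≤ _ := ENNReal.ofReal_le_ofReal (by
          rw [min_def]
          split <;> linarith [hx.1, hx.2])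

end Geo
section Main
open Set MeasureTheory Filter
open scoped ENNReal

lemma tent_measurable : Measurable tent := by
  unfold tent
  exact measurable_const.sub (((measurable_fract.sub measurable_const).abs).const_mul 2)

variable {μ : Measure ℝ} [IsProbabilityMeasure μ]

lemma quantile_aemeasurable :
    AEMeasurable (quantile μ) (volume.restrict (Ioo (0:ℝ) 1)) :=
  aemeasurable_restrict_of_monotoneOn measurableSet_Ioo quantile_monotoneOn

lemma probIoo : IsProbabilityMeasure (volume.restrict (Ioo (0:ℝ) 1)) :=
  ⟨by rw [Measure.restrict_apply_univ, Real.volume_Ioo]; norm_num⟩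

lemma unifAtoms_prob {n : ℕ} (hn : 0 < n) (y : Fin n → ℝ) :
    IsProbabilityMeasure (unifAtoms n y) := by
  constructor
  rw [unifAtoms, Measure.smul_apply, smul_eq_mul]
  have : (∑ i, Measure.dirac (y i)) (univ : Set ℝ) = (n : ℝ≥0∞) := by
    rw [Measure.finset_sum_apply]
    simp
  rw [this, ENNReal.inv_mul_cancel (by exact_mod_cast hn.ne') (by simp)]

lemma L1_le_drE {r : ℝ} (hr : 1 ≤ r) (ν : Measure ℝ) [IsProbabilityMeasure ν] :
    ∫⁻ t in Ioo (0:ℝ) 1, ENNReal.ofReal |quantile ν t - quantile μ t| ≤ drE r ν μ := by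
  haveI : IsProbabilityMeasure (volume.restrict (Ioo (0:ℝ) 1)) := probIoo
  set g : ℝ → ℝ := fun t => |quantile ν t - quantile μ t| with hg
  have hg_ae : AEMeasurable g (volume.restrict (Ioo (0:ℝ) 1)) :=
    continuous_abs.measurable.comp_aemeasurable
      ((quantile_aemeasurable (μ := ν)).sub (quantile_aemeasurable (μ := μ)))
  have hr0 : 0 < r := lt_of_lt_of_le one_pos hr
  have hne0 : (ENNReal.ofReal r) ≠ 0 := by
    simp only [ne_eq, ENNReal.ofReal_eq_zero, not_le]; linarith
  have e1 : drE r ν μ = eLpNorm g (ENNReal.ofReal r) (volume.restrict (Ioo (0:ℝ) 1)) := by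
    rw [drE, eLpNorm_eq_lintegral_rpow_enorm_toReal hne0 ENNReal.ofReal_ne_top,
      ENNReal.toReal_ofReal hr0.le]
    congr 1
    apply lintegral_congr
    intro t
    rw [hg]
    rw [Real.enorm_eq_ofReal_abs, abs_abs]
  have e3 : eLpNorm g 1 (volume.restrict (Ioo (0:ℝ) 1)) =
      ∫⁻ t in Ioo (0:ℝ) 1, ENNReal.ofReal |quantile ν t - quantile μ t| := by
    rw [eLpNorm_one_eq_lintegral_enorm]
    apply lintegral_congr
    intro t
    rw [hg, Real.enorm_eq_ofReal_abs, abs_abs]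
  rw [e1, ← e3]
  exact eLpNorm_le_eLpNorm_of_exponent_le (ENNReal.one_le_ofReal.2 hr)
    hg_ae.aestronglyMeasurable

end Main
section Main2
open Set MeasureTheory Filter
open scoped ENNReal

lemma sum_range_even_odd {β : Type*} [AddCommMonoid β] (g : ℕ → β) (n : ℕ) :
    ∑ j ∈ Finset.range (2*n), g j = ∑ k ∈ Finset.range n, (g (2*k) + g (2*k+1)) := by
  induction n with
  | zero => simp
  | succ m ih =>
    rw [Finset.sum_range_succ, ← ih, show 2*(m+1) = (2*m)+1+1 by ring,
      Finset.sum_range_succ, Finset.sum_range_succ, add_assoc]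

variable {μ : Measure ℝ} [IsProbabilityMeasure μ]

lemma chain {r : ℝ} (hr : 1 ≤ r) {n : ℕ} (hn : 0 < n) (y : Fin n → ℝ) (hy : Monotone y) :
    (ENNReal.ofReal (2*(n:ℝ)))⁻¹ * (∫⁻ s, ENNReal.ofReal (tent ((n:ℝ) * tau μ s)))
      ≤ drE r (unifAtoms n y) μ := by
  haveI : IsProbabilityMeasure (unifAtoms n y) := unifAtoms_prob hn y
  have hnpos : (0:ℝ) < (n:ℝ) := by exact_mod_cast hn
  obtain ⟨d, hd⟩ : ∃ d : ℝ, d = (2*(n:ℝ))⁻¹ := ⟨_, rfl⟩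
  have hdpos : 0 < d := by rw [hd]; positivity
  have hnd : (n:ℝ) * d = 2⁻¹ := by rw [hd]; field_simp
  have h2nd : 2*(n:ℝ)*d = 1 := by rw [hd]; field_simp
  set ν : Measure ℝ := unifAtoms n y with hν
  set F : ℝ → ℝ≥0∞ := fun t => ENNReal.ofReal |quantile ν t - quantile μ t| with hF
  set C : ℕ → Set ℝ := fun j => Ioo ((j:ℝ)*d) ((j:ℝ)*d + d) with hC
  -- covering facts
  have hCsub : ∀ j, j < 2*n → C j ⊆ Ioo (0:ℝ) 1 := by
    intro j hj z hz
    simp only [hC] at hz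
    have hj' : (j:ℝ) + 1 ≤ 2*(n:ℝ) := by exact_mod_cast hj
    have h1 : (0:ℝ) ≤ (j:ℝ)*d := by positivity
    have h2 : ((j:ℝ)+1)*d ≤ (2*(n:ℝ))*d :=
      mul_le_mul_of_nonneg_right hj' hdpos.le
    constructor
    · linarith [hz.1]
    · have := hz.2; nlinarith
  have hCdisjAux : ∀ i j : ℕ, i < j → Disjoint (C i) (C j) := by
    intro i j hij
    rw [Set.disjoint_left]
    intro z hzi hzj
    simp only [hC] at hzi hzj
    have h1 : ((i:ℝ)+1) ≤ (j:ℝ) := by exact_mod_cast hij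
    have h2 : ((i:ℝ)+1)*d ≤ (j:ℝ)*d := mul_le_mul_of_nonneg_right h1 hdpos.le
    have := hzi.2
    have := hzj.1
    nlinarith
  have hCdisj : (↑(Finset.range (2*n)) : Set ℕ).PairwiseDisjoint C := by
    intro i _ j _ hij
    rcases lt_or_gt_of_ne hij with h | h
    · exact hCdisjAux i j h
    · exact (hCdisjAux j i h).symm
  -- quantile of ν on C (2k) ∪ C (2k+1)
  have hQν : ∀ k : ℕ, (hk : k < n) → ∀ t ∈ C (2*k) ∪ C (2*k+1),
      quantile ν t = y ⟨k, hk⟩ := by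
    intro k hk t ht
    have hknd : (k:ℝ) * ((n:ℝ)*d) = (k:ℝ) * 2⁻¹ := by rw [hnd]
    have hbound : 2*(k:ℝ)*d < t ∧ t < 2*(k:ℝ)*d + 2*d := by
      rcases ht with h | h
      · simp only [hC] at h
        have e : ((2*k:ℕ):ℝ) = 2*(k:ℝ) := by push_cast; ring
        rw [e] at h
        exact ⟨h.1, by linarith [h.2]⟩
      · simp only [hC] at h
        have e : ((2*k+1:ℕ):ℝ) = 2*(k:ℝ) + 1 := by push_cast; ring
        rw [e] at h
        exact ⟨by nlinarith [h.1], by nlinarith [h.2]⟩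
    apply quantile_unifAtoms hy hk
    · nlinarith [hbound.1, hknd, hnd]
    · nlinarith [hbound.2, hknd, hnd]
  -- step γ : per k lower bound by quantile increments
  have hγ : ∀ k : ℕ, k < n →
      ∫⁻ t in C (2*k), ENNReal.ofReal (quantile μ (t + d) - quantile μ t)
        ≤ (∫⁻ t in C (2*k), F t) + ∫⁻ t in C (2*k+1), F t := by
    intro k hk
    set ck : ℝ := y ⟨k, hk⟩ with hck
    have hF1 : ∫⁻ t in C (2*k), F t = ∫⁻ t in C (2*k), ENNReal.ofReal |ck - quantile μ t| := by
      apply setLIntegral_congr_fun (by simp only [hC]; exact measurableSet_Ioo)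
      intro t ht
      rw [hF]
      simp only
      rw [hQν k hk t (Or.inl ht)]
    have hF2 : ∫⁻ t in C (2*k+1), F t
        = ∫⁻ t in C (2*k+1), ENNReal.ofReal |ck - quantile μ t| := by
      apply setLIntegral_congr_fun (by simp only [hC]; exact measurableSet_Ioo)
      intro t ht
      rw [hF]
      simp only
      rw [hQν k hk t (Or.inr ht)]
    have hmap : Measure.map (fun t => t + d) (volume.restrict (C (2*k)))
        = volume.restrict (C (2*k+1)) := by
      have hpre : (fun t => t + d) ⁻¹' (C (2*k+1)) = C (2*k) := by
        simp only [hC]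
        rw [preimage_add_const_Ioo]
        congr 1 <;> push_cast <;> ring
      rw [← hpre, ← Measure.restrict_map (measurable_add_const d) (by simp only [hC]; exact measurableSet_Ioo)]
      rw [map_add_right_eq_self]
    have htrans : ∫⁻ t in C (2*k+1), ENNReal.ofReal |ck - quantile μ t|
        = ∫⁻ t in C (2*k), ENNReal.ofReal |ck - quantile μ (t + d)| := by
      rw [← hmap, MeasurableEmbedding.lintegral_map (measurableEmbedding_addRight d)]
    rw [hF1, hF2, htrans]
    have hae1 : AEMeasurable (fun t => ENNReal.ofReal |ck - quantile μ t|)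
        (volume.restrict (C (2*k))) := by
      apply ENNReal.measurable_ofReal.comp_aemeasurable
      apply continuous_abs.measurable.comp_aemeasurable
      apply AEMeasurable.const_sub
      exact quantile_aemeasurable.mono_measure
        (Measure.restrict_mono (hCsub (2*k) (by omega)) le_rfl)
    calc ∫⁻ t in C (2*k), ENNReal.ofReal (quantile μ (t + d) - quantile μ t)
        ≤ ∫⁻ t in C (2*k), (ENNReal.ofReal |ck - quantile μ t|
            + ENNReal.ofReal |ck - quantile μ (t + d)|) := by
          apply lintegral_mono
          intro t
          have h1 : quantile μ (t + d) - quantile μ t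
              ≤ |ck - quantile μ t| + |ck - quantile μ (t + d)| := by
            have a1 := le_abs_self (ck - quantile μ t)
            have a2 := neg_abs_le (ck - quantile μ (t + d))
            linarith
          calc ENNReal.ofReal (quantile μ (t + d) - quantile μ t)
              ≤ ENNReal.ofReal (|ck - quantile μ t| + |ck - quantile μ (t + d)|) :=
                ENNReal.ofReal_le_ofReal h1
            _ ≤ _ := ENNReal.ofReal_add_le
      _ = _ := lintegral_add_left' hae1 _
  -- step E : lower bound by the tau window volumes
  have hwin : ∀ k : ℕ, k < n →
      ∫⁻ t in C (2*k), volume (tau μ ⁻¹' (Ioo t (t + d)))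
        ≤ ∫⁻ t in C (2*k), ENNReal.ofReal (quantile μ (t + d) - quantile μ t) := by
    intro k hk
    apply lintegral_mono_ae
    rw [ae_restrict_iff' (by simp only [hC]; exact measurableSet_Ioo)]
    apply ae_of_all
    intro t ht
    have htI : t ∈ Ioo (0:ℝ) 1 := hCsub (2*k) (by omega) ht
    have htdI : t + d ∈ Ioo (0:ℝ) 1 := by
      simp only [hC] at ht
      have e : ((2*k:ℕ):ℝ) ≤ 2*(n:ℝ) - 2 := by
        push_cast
        have : (k:ℝ) ≤ (n:ℝ) - 1 := by
          have : (k:ℝ) + 1 ≤ (n:ℝ) := by exact_mod_cast hk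
          linarith
        linarith
      constructor
      · linarith [htI.1]
      · have h2 := ht.2
        nlinarith [ht.2]
    have hsub2 : tau μ ⁻¹' (Ioo t (t + d)) ⊆ Ico (quantile μ t) (quantile μ (t + d)) := by
      intro s hs
      exact ⟨quantile_le_of_lt_tau htI hs.1, lt_quantile_of_tau_lt htdI hs.2⟩
    calc volume (tau μ ⁻¹' (Ioo t (t + d)))
        ≤ volume (Ico (quantile μ t) (quantile μ (t + d))) := measure_mono hsub2
      _ = ENNReal.ofReal (quantile μ (t + d) - quantile μ t) := Real.volume_Ico
  -- swap via Tonelli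
  set EN : Set ℝ := ⋃ k ∈ Finset.range n, C (2*k) with hEN
  have hENdisj : (↑(Finset.range n) : Set ℕ).PairwiseDisjoint (fun k => C (2*k)) := by
    intro i _ j _ hij
    rcases lt_or_gt_of_ne hij with h | h
    · exact hCdisjAux _ _ (by omega)
    · exact (hCdisjAux _ _ (by omega)).symm
  have hENmeas : MeasurableSet EN := by
    rw [hEN]
    exact MeasurableSet.biUnion (Finset.range n).countable_toSet
      (fun k _ => by simp only [hC]; exact measurableSet_Ioo)
  have hswap : ∫⁻ t in EN, volume (tau μ ⁻¹' (Ioo t (t + d)))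
      = ∫⁻ s, volume (EN ∩ Ioo (tau μ s - d) (tau μ s)) ∂volume := by
    have hSS : MeasurableSet {p : ℝ × ℝ | p.1 < tau μ p.2 ∧ tau μ p.2 < p.1 + d} := by
      apply MeasurableSet.inter
      · exact measurableSet_lt measurable_fst ((tau_measurable).comp measurable_snd)
      · exact measurableSet_lt ((tau_measurable).comp measurable_snd)
          (measurable_fst.add_const d)
    have h1 : ∀ t : ℝ, volume (tau μ ⁻¹' (Ioo t (t + d)))
        = ∫⁻ s, {p : ℝ × ℝ | p.1 < tau μ p.2 ∧ tau μ p.2 < p.1 + d}.indicator 1 (t, s)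
            ∂volume := by
      intro t
      rw [← lintegral_indicator_one (tau_measurable measurableSet_Ioo)]
      apply lintegral_congr
      intro s
      by_cases h : t < tau μ s ∧ tau μ s < t + d <;>
        simp [Set.indicator_apply, Set.mem_preimage, Set.mem_Ioo, Set.mem_setOf_eq, h]
    have h2 : ∀ s : ℝ, ∫⁻ t in EN,
        {p : ℝ × ℝ | p.1 < tau μ p.2 ∧ tau μ p.2 < p.1 + d}.indicator 1 (t, s)
          = volume (EN ∩ Ioo (tau μ s - d) (tau μ s)) := by
      intro s
      have hsec : (fun t => {p : ℝ × ℝ | p.1 < tau μ p.2 ∧ tau μ p.2 < p.1 + d}.indicator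
          (1 : ℝ × ℝ → ℝ≥0∞) (t, s)) = (Ioo (tau μ s - d) (tau μ s)).indicator 1 := by
        funext t
        have hiff : (t < tau μ s ∧ tau μ s < t + d) ↔ (tau μ s - d < t ∧ t < tau μ s) := by
          constructor <;> (intro h; constructor <;> linarith [h.1, h.2])
        by_cases h : t < tau μ s ∧ tau μ s < t + d
        · simp [Set.indicator_apply, Set.mem_setOf_eq, Set.mem_Ioo, h, hiff.1 h]
        · simp [Set.indicator_apply, Set.mem_setOf_eq, Set.mem_Ioo, h, hiff.not.1 h]
      rw [hsec, lintegral_indicator_one measurableSet_Ioo,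
        Measure.restrict_apply measurableSet_Ioo, Set.inter_comm]
    calc ∫⁻ t in EN, volume (tau μ ⁻¹' (Ioo t (t + d)))
        = ∫⁻ t in EN, ∫⁻ s, {p : ℝ × ℝ | p.1 < tau μ p.2 ∧ tau μ p.2 < p.1 + d}.indicator
            1 (t, s) ∂volume := by
          apply lintegral_congr
          intro t
          exact h1 t
      _ = ∫⁻ s, ∫⁻ t in EN, {p : ℝ × ℝ | p.1 < tau μ p.2 ∧ tau μ p.2 < p.1 + d}.indicator
            1 (t, s) ∂volume := by
          apply lintegral_lintegral_swap
          exact ((measurable_one.indicator hSS).aemeasurable)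
      _ = _ := by
          apply lintegral_congr
          intro s
          exact h2 s
  -- per-s tent bound
  have htent : ∫⁻ s, ENNReal.ofReal (tent ((n:ℝ) * tau μ s)) ∂volume
      ≤ ENNReal.ofReal (2*(n:ℝ)) * ∫⁻ s, volume (EN ∩ Ioo (tau μ s - d) (tau μ s)) ∂volume := by
    rw [← lintegral_const_mul' _ _ ENNReal.ofReal_ne_top]
    apply lintegral_mono
    intro s
    have := tentLB hn (x := tau μ s) ⟨tau_nonneg s, tau_le_one s⟩
    rw [← hd] at this
    exact this
  -- assemble
  have hassemble : ∫⁻ s, ENNReal.ofReal (tent ((n:ℝ) * tau μ s)) ∂volume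
      ≤ ENNReal.ofReal (2*(n:ℝ)) * ∫⁻ t in Ioo (0:ℝ) 1, F t := by
    have hA : ∫⁻ t in EN, volume (tau μ ⁻¹' (Ioo t (t + d)))
        = ∑ k ∈ Finset.range n, ∫⁻ t in C (2*k), volume (tau μ ⁻¹' (Ioo t (t + d))) := by
      rw [hEN]
      exact lintegral_biUnion_finset hENdisj
        (fun k _ => by simp only [hC]; exact measurableSet_Ioo) _
    have hB : ∑ k ∈ Finset.range n, ((∫⁻ t in C (2*k), F t) + ∫⁻ t in C (2*k+1), F t)
        ≤ ∫⁻ t in Ioo (0:ℝ) 1, F t := by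
      rw [← sum_range_even_odd (fun j => ∫⁻ t in C j, F t) n]
      rw [← lintegral_biUnion_finset hCdisj (fun j _ => by simp only [hC]; exact measurableSet_Ioo) _]
      apply lintegral_mono'
      · apply Measure.restrict_mono _ le_rfl
        intro z hz
        rw [mem_iUnion] at hz
        obtain ⟨j, hj⟩ := hz
        rw [mem_iUnion] at hj
        obtain ⟨hjr, hzj⟩ := hj
        exact hCsub j (Finset.mem_range.1 hjr) hzj
      · exact le_rfl
    calc ∫⁻ s, ENNReal.ofReal (tent ((n:ℝ) * tau μ s)) ∂volume
        ≤ ENNReal.ofReal (2*(n:ℝ)) * ∫⁻ s, volume (EN ∩ Ioo (tau μ s - d) (tau μ s)) ∂volume :=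
          htent
      _ = ENNReal.ofReal (2*(n:ℝ)) * ∫⁻ t in EN, volume (tau μ ⁻¹' (Ioo t (t + d))) := by
          rw [hswap]
      _ ≤ ENNReal.ofReal (2*(n:ℝ)) * ∫⁻ t in Ioo (0:ℝ) 1, F t := by
          apply mul_le_mul_right
          rw [hA]
          calc ∑ k ∈ Finset.range n, ∫⁻ t in C (2*k), volume (tau μ ⁻¹' (Ioo t (t + d)))
              ≤ ∑ k ∈ Finset.range n,
                  ((∫⁻ t in C (2*k), F t) + ∫⁻ t in C (2*k+1), F t) := by
                apply Finset.sum_le_sum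
                intro k hk
                exact le_trans (hwin k (Finset.mem_range.1 hk))
                  (hγ k (Finset.mem_range.1 hk))
            _ ≤ _ := hB
  have hc_ne0 : ENNReal.ofReal (2*(n:ℝ)) ≠ 0 := by
    simp only [ne_eq, ENNReal.ofReal_eq_zero, not_le]
    positivity
  calc (ENNReal.ofReal (2*(n:ℝ)))⁻¹ * (∫⁻ s, ENNReal.ofReal (tent ((n:ℝ) * tau μ s)))
      ≤ (ENNReal.ofReal (2*(n:ℝ)))⁻¹ *
          (ENNReal.ofReal (2*(n:ℝ)) * ∫⁻ t in Ioo (0:ℝ) 1, F t) :=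
        mul_le_mul_right hassemble _
    _ = ∫⁻ t in Ioo (0:ℝ) 1, F t := by
        rw [← mul_assoc, ENNReal.inv_mul_cancel hc_ne0 ENNReal.ofReal_ne_top, one_mul]
    _ ≤ drE r ν μ := L1_le_drE hr ν

end Main2
section Main3
open Set MeasureTheory Filter Topology
open scoped ENNReal

variable {μ : Measure ℝ} [IsProbabilityMeasure μ]

lemma tenttau_meas (i : ℕ) :
    Measurable fun s => ENNReal.ofReal (tent ((i:ℝ) * tau μ s)) :=
  ENNReal.measurable_ofReal.comp (tent_measurable.comp ((tau_measurable).const_mul _))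

lemma Tprime_le_TV :
    (∫⁻ t in Ioo (0:ℝ) (1/2), ENNReal.ofReal (quantile μ (t + 1/2) - quantile μ t))
      ≤ ∫⁻ s, ENNReal.ofReal (min (tau μ s) (1 - tau μ s)) ∂volume := by
  have hSS : MeasurableSet {p : ℝ × ℝ | p.1 ≤ tau μ p.2 ∧ tau μ p.2 ≤ p.1 + 1/2} := by
    apply MeasurableSet.inter
    · exact measurableSet_le measurable_fst ((tau_measurable).comp measurable_snd)
    · exact measurableSet_le ((tau_measurable).comp measurable_snd)
        (measurable_fst.add_const _)
  have hmeasI : Measurable fun t : ℝ => ∫⁻ s,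
      {p : ℝ × ℝ | p.1 ≤ tau μ p.2 ∧ tau μ p.2 ≤ p.1 + 1/2}.indicator 1 (t, s) ∂volume := by
    apply Measurable.lintegral_prod_right
    exact measurable_one.indicator hSS
  calc (∫⁻ t in Ioo (0:ℝ) (1/2), ENNReal.ofReal (quantile μ (t + 1/2) - quantile μ t))
      ≤ ∫⁻ t in Ioo (0:ℝ) (1/2), ∫⁻ s,
          {p : ℝ × ℝ | p.1 ≤ tau μ p.2 ∧ tau μ p.2 ≤ p.1 + 1/2}.indicator 1 (t, s) ∂volume := by
        apply setLIntegral_mono hmeasI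
        intro t ht
        have htI : t ∈ Ioo (0:ℝ) 1 := ⟨ht.1, by linarith [ht.2]⟩
        have htdI : t + 1/2 ∈ Ioo (0:ℝ) 1 := ⟨by linarith [ht.1], by linarith [ht.2]⟩
        have hIco : Ico (quantile μ t) (quantile μ (t + 1/2))
            ⊆ {s : ℝ | t ≤ tau μ s ∧ tau μ s ≤ t + 1/2} := by
          intro s hs
          exact ⟨le_tau_of_quantile_le htI hs.1, tau_le_of_lt_quantile htdI hs.2⟩
        calc ENNReal.ofReal (quantile μ (t + 1/2) - quantile μ t)
            = volume (Ico (quantile μ t) (quantile μ (t + 1/2))) := Real.volume_Ico.symm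
          _ ≤ volume {s : ℝ | t ≤ tau μ s ∧ tau μ s ≤ t + 1/2} := measure_mono hIco
          _ = _ := by
              rw [← lintegral_indicator_one]
              · apply lintegral_congr
                intro s
                by_cases h : t ≤ tau μ s ∧ tau μ s ≤ t + 1/2 <;>
                  simp [Set.indicator_apply, Set.mem_setOf_eq, h]
              · have : {s : ℝ | t ≤ tau μ s ∧ tau μ s ≤ t + 1/2}
                    = tau μ ⁻¹' (Icc t (t + 1/2)) := rfl
                rw [this]
                exact tau_measurable measurableSet_Icc
    _ = ∫⁻ s, ∫⁻ t in Ioo (0:ℝ) (1/2),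
          {p : ℝ × ℝ | p.1 ≤ tau μ p.2 ∧ tau μ p.2 ≤ p.1 + 1/2}.indicator 1 (t, s) ∂volume := by
        apply lintegral_lintegral_swap
        exact (measurable_one.indicator hSS).aemeasurable
    _ ≤ _ := by
        apply lintegral_mono
        intro s
        beta_reduce
        have hsec : (fun t => {p : ℝ × ℝ | p.1 ≤ tau μ p.2 ∧ tau μ p.2 ≤ p.1 + 1/2}.indicator
            (1 : ℝ × ℝ → ℝ≥0∞) (t, s)) = (Icc (tau μ s - 1/2) (tau μ s)).indicator 1 := by
          funext t
          have hiff : (t ≤ tau μ s ∧ tau μ s ≤ t + 1/2)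
              ↔ (tau μ s - 1/2 ≤ t ∧ t ≤ tau μ s) := by
            constructor <;> (intro h; constructor <;> linarith [h.1, h.2])
          by_cases h : t ≤ tau μ s ∧ tau μ s ≤ t + 1/2
          · rw [Set.indicator_of_mem (show (t,s) ∈ {p : ℝ × ℝ | p.1 ≤ tau μ p.2
                ∧ tau μ p.2 ≤ p.1 + 1/2} from h),
              Set.indicator_of_mem (show t ∈ Icc (tau μ s - 1/2) (tau μ s) from
                ⟨by linarith [h.1, h.2], h.1⟩)]
            rfl
          · rw [Set.indicator_of_notMem (show (t,s) ∉ {p : ℝ × ℝ | p.1 ≤ tau μ p.2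
                ∧ tau μ p.2 ≤ p.1 + 1/2} from h),
              Set.indicator_of_notMem (show t ∉ Icc (tau μ s - 1/2) (tau μ s) from
                fun hb => h (hiff.2 (mem_Icc.1 hb)))]
        rw [hsec, lintegral_indicator_one measurableSet_Icc,
          Measure.restrict_apply measurableSet_Icc, Set.inter_comm]
        have h12 : (1/2 : ℝ) = 2⁻¹ := by norm_num
        rw [h12]
        exact volA ⟨tau_nonneg s, tau_le_one s⟩

lemma cesaro (M : ℕ) :
    (∫⁻ s, ENNReal.ofReal (min (tau μ s) (1 - tau μ s)) ∂volume)
      ≤ ⨆ i, ⨆ (_ : M ≤ i), ∫⁻ s, ENNReal.ofReal (tent ((i:ℝ) * tau μ s)) ∂volume := by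
  set S := ⨆ i, ⨆ (_ : M ≤ i), ∫⁻ s, ENNReal.ofReal (tent ((i:ℝ) * tau μ s)) ∂volume with hS
  have key : ∀ W : ℕ, 0 < W →
      (∫⁻ s, ENNReal.ofReal (min (tau μ s) (1 - tau μ s) - (2*(W:ℝ))⁻¹) ∂volume) ≤ S := by
    intro W hW
    have hWpos : (0:ℝ) < (W:ℝ) := by exact_mod_cast hW
    have hpt : ∀ s : ℝ, (W:ℝ≥0∞) * ENNReal.ofReal (min (tau μ s) (1 - tau μ s) - (2*(W:ℝ))⁻¹)
        ≤ ∑ i ∈ Finset.Ioc M (M+W), ENNReal.ofReal (tent ((i:ℝ) * tau μ s)) := by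
      intro s
      set x := tau μ s with hx
      have hsum := tent_sum_Ioc x M (M+W) (by omega)
      have hcast : ((M+W:ℕ):ℝ) - (M:ℕ) = (W:ℝ) := by push_cast; ring
      rw [hcast] at hsum
      have h1 : (W:ℝ) * (min x (1-x) - (2*(W:ℝ))⁻¹) = (W:ℝ) * min x (1-x) - 2⁻¹ := by
        field_simp
      calc (W:ℝ≥0∞) * ENNReal.ofReal (min x (1-x) - (2*(W:ℝ))⁻¹)
          = ENNReal.ofReal ((W:ℝ) * (min x (1-x) - (2*(W:ℝ))⁻¹)) := by
            rw [ENNReal.ofReal_mul hWpos.le, ENNReal.ofReal_natCast]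
        _ ≤ ENNReal.ofReal (∑ i ∈ Finset.Ioc M (M+W), tent ((i:ℝ) * x)) := by
            apply ENNReal.ofReal_le_ofReal
            rw [h1]
            exact hsum
        _ = ∑ i ∈ Finset.Ioc M (M+W), ENNReal.ofReal (tent ((i:ℝ) * x)) :=
            ENNReal.ofReal_sum_of_nonneg (fun i _ => tent_nonneg _)
    have hint : (W:ℝ≥0∞) * (∫⁻ s, ENNReal.ofReal (min (tau μ s) (1 - tau μ s) - (2*(W:ℝ))⁻¹) ∂volume)
        ≤ (W:ℝ≥0∞) * S := by
      calc (W:ℝ≥0∞) * (∫⁻ s, ENNReal.ofReal (min (tau μ s) (1 - tau μ s) - (2*(W:ℝ))⁻¹) ∂volume)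
          = ∫⁻ s, (W:ℝ≥0∞) * ENNReal.ofReal (min (tau μ s) (1 - tau μ s) - (2*(W:ℝ))⁻¹) ∂volume :=
            (lintegral_const_mul' _ _ (by simp)).symm
        _ ≤ ∫⁻ s, ∑ i ∈ Finset.Ioc M (M+W), ENNReal.ofReal (tent ((i:ℝ) * tau μ s)) ∂volume :=
            lintegral_mono hpt
        _ = ∑ i ∈ Finset.Ioc M (M+W), ∫⁻ s, ENNReal.ofReal (tent ((i:ℝ) * tau μ s)) ∂volume :=
            lintegral_finset_sum' _ (fun i _ => (tenttau_meas i).aemeasurable)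
        _ ≤ ∑ _i ∈ Finset.Ioc M (M+W), S := by
            apply Finset.sum_le_sum
            intro i hi
            rw [hS]
            have hMi : M ≤ i := le_of_lt (Finset.mem_Ioc.1 hi).1
            exact le_iSup₂ (f := fun i (_ : M ≤ i) =>
              ∫⁻ s, ENNReal.ofReal (tent ((i:ℝ) * tau μ s)) ∂volume) i hMi
        _ = (W:ℝ≥0∞) * S := by
            rw [Finset.sum_const, Nat.card_Ioc]
            simp [nsmul_eq_mul]
    exact (ENNReal.mul_le_mul_iff_right (by exact_mod_cast hW.ne') (by simp)).1 hint
  -- monotone convergence in W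
  have hsup : ∀ a : ℝ, ⨆ W : ℕ, ENNReal.ofReal (a - (2*((W:ℝ)+1))⁻¹) = ENNReal.ofReal a := by
    intro a
    apply le_antisymm
    · apply iSup_le
      intro W
      apply ENNReal.ofReal_le_ofReal
      have : (0:ℝ) < (2*((W:ℝ)+1))⁻¹ := by positivity
      linarith
    · have hmono : Monotone fun W : ℕ => ENNReal.ofReal (a - (2*((W:ℝ)+1))⁻¹) := by
        intro i j hij
        apply ENNReal.ofReal_le_ofReal
        have hij' : (i:ℝ) ≤ (j:ℝ) := by exact_mod_cast hij
        have h1 : (2*((j:ℝ)+1))⁻¹ ≤ (2*((i:ℝ)+1))⁻¹ := by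
          apply inv_anti₀ (by positivity)
          linarith
        linarith
      have htend : Tendsto (fun W : ℕ => a - (2*((W:ℝ)+1))⁻¹) atTop (𝓝 a) := by
        have h0 : Tendsto (fun W : ℕ => (2*((W:ℝ)+1))⁻¹) atTop (𝓝 0) := by
          have h1 : Tendsto (fun W : ℕ => ((W:ℝ)+1)) atTop atTop := by
            apply tendsto_atTop_add_const_right
            exact tendsto_natCast_atTop_atTop
          have h2 : Tendsto (fun W : ℕ => (2*((W:ℝ)+1))) atTop atTop :=
            (tendsto_const_mul_atTop_of_pos two_pos).2 h1
          exact h2.inv_tendsto_atTop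
        have := (tendsto_const_nhds (x := a) (f := (atTop : Filter ℕ))).sub h0
        simpa using this
      have htend2 : Tendsto (fun W : ℕ => ENNReal.ofReal (a - (2*((W:ℝ)+1))⁻¹)) atTop
          (𝓝 (ENNReal.ofReal a)) :=
        (ENNReal.continuous_ofReal.tendsto a).comp htend
      have := tendsto_atTop_iSup hmono
      exact le_of_eq (tendsto_nhds_unique htend2 this)
  calc (∫⁻ s, ENNReal.ofReal (min (tau μ s) (1 - tau μ s)) ∂volume)
      = ∫⁻ s, ⨆ W : ℕ, ENNReal.ofReal (min (tau μ s) (1 - tau μ s) - (2*((W:ℝ)+1))⁻¹) ∂volume := by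
        apply lintegral_congr
        intro s
        rw [hsup]
    _ = ⨆ W : ℕ, ∫⁻ s, ENNReal.ofReal (min (tau μ s) (1 - tau μ s) - (2*((W:ℝ)+1))⁻¹) ∂volume := by
        apply lintegral_iSup'
        · intro W
          apply Measurable.aemeasurable
          apply ENNReal.measurable_ofReal.comp
          apply Measurable.sub _ measurable_const
          exact (tau_measurable).min (measurable_const.sub tau_measurable)
        · apply ae_of_all
          intro s i j hij
          apply ENNReal.ofReal_le_ofReal
          have hij' : (i:ℝ) ≤ (j:ℝ) := by exact_mod_cast hij
          have h1 : (2*((j:ℝ)+1))⁻¹ ≤ (2*((i:ℝ)+1))⁻¹ := by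
            apply inv_anti₀ (by positivity)
            linarith
          linarith
    _ ≤ S := by
        apply iSup_le
        intro W
        have := key (W+1) (by omega)
        have hc : ((W+1:ℕ):ℝ) = (W:ℝ)+1 := by push_cast; ring
        rw [hc] at this
        exact this

end Main3
section Main4
open Set MeasureTheory Filter Topology
open scoped ENNReal

variable {μ : Measure ℝ} [IsProbabilityMeasure μ]

lemma dirac_of_T0
    (h0 : (∫⁻ t in Ioo (0:ℝ) (1/2),
      ENNReal.ofReal (quantile μ (t + 1/2) - quantile μ t)) = 0) :
    ∃ c : ℝ, μ = Measure.dirac c := by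
  have hsub12 : Ioo (0:ℝ) (1/2) ⊆ Ioo (0:ℝ) 1 := fun z hz => ⟨hz.1, by linarith [hz.2]⟩
  have hQa : AEMeasurable (quantile μ) (volume.restrict (Ioo (0:ℝ) (1/2))) :=
    quantile_aemeasurable.mono_measure (Measure.restrict_mono hsub12 le_rfl)
  have hQb : AEMeasurable (fun t => quantile μ (t + 1/2)) (volume.restrict (Ioo (0:ℝ) (1/2))) := by
    have hmap : Measure.map (fun t : ℝ => t + 1/2) (volume.restrict (Ioo (0:ℝ) (1/2)))
        = volume.restrict (Ioo (1/2:ℝ) 1) := by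
      have hpre : (fun t : ℝ => t + 1/2) ⁻¹' (Ioo (1/2:ℝ) 1) = Ioo (0:ℝ) (1/2) := by
        rw [preimage_add_const_Ioo]
        norm_num
      rw [← hpre, ← Measure.restrict_map (measurable_add_const _) measurableSet_Ioo,
        map_add_right_eq_self]
    have h2 : AEMeasurable (quantile μ) (volume.restrict (Ioo (1/2:ℝ) 1)) :=
      quantile_aemeasurable.mono_measure
        (Measure.restrict_mono (show Ioo (1/2:ℝ) 1 ⊆ Ioo (0:ℝ) 1 from
          fun z hz => ⟨by linarith [hz.1], hz.2⟩) le_rfl)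
    have hiff := (measurableEmbedding_addRight (1/2:ℝ)).aemeasurable_map_iff
      (g := quantile μ) (μ := volume.restrict (Ioo (0:ℝ) (1/2)))
    rw [hmap] at hiff
    exact hiff.1 h2
  have hf_ae : AEMeasurable (fun t => ENNReal.ofReal (quantile μ (t + 1/2) - quantile μ t))
      (volume.restrict (Ioo (0:ℝ) (1/2))) :=
    ENNReal.measurable_ofReal.comp_aemeasurable (hQb.sub hQa)
  rw [lintegral_eq_zero_iff' hf_ae] at h0
  have hnull : volume ({t : ℝ | quantile μ t < quantile μ (t + 1/2)} ∩ Ioo (0:ℝ) (1/2)) = 0 := by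
    have h1 := h0
    rw [Filter.EventuallyEq, ae_iff] at h1
    simp only [Pi.zero_apply, ENNReal.ofReal_eq_zero, sub_nonpos, not_le] at h1
    rw [Measure.restrict_apply' measurableSet_Ioo] at h1
    exact h1
  have hgood : ∀ α β : ℝ, 0 < α → α < β → β ≤ 1/2 →
      ∃ s, s ∈ Ioo α β ∧ quantile μ (s + 1/2) ≤ quantile μ s := by
    intro α β hα hαβ hβ
    by_contra hc
    push_neg at hc
    have hsub : Ioo α β ⊆ {t : ℝ | quantile μ t < quantile μ (t + 1/2)} ∩ Ioo (0:ℝ) (1/2) := by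
      intro z hz
      exact ⟨hc z hz, ⟨by linarith [hz.1], by linarith [hz.2]⟩⟩
    have := measure_mono_null hsub hnull
    rw [Real.volume_Ioo] at this
    rw [ENNReal.ofReal_eq_zero] at this
    linarith
  obtain ⟨s1, hs1m, hs1⟩ := hgood (1/8) (1/4) (by norm_num) (by norm_num) (by norm_num)
  have hs1I : s1 ∈ Ioo (0:ℝ) (1/2) := ⟨by linarith [hs1m.1], by linarith [hs1m.2]⟩
  set c0 : ℝ := quantile μ s1 with hc0
  have hmemI : ∀ s : ℝ, s ∈ Ioo (0:ℝ) (1/2) → s ∈ Ioo (0:ℝ) 1 := fun s hs => hsub12 hs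
  have hmemI2 : ∀ s : ℝ, s ∈ Ioo (0:ℝ) (1/2) → s + 1/2 ∈ Ioo (0:ℝ) 1 :=
    fun s hs => ⟨by linarith [hs.1], by linarith [hs.2]⟩
  have hval : ∀ s, s ∈ Ioo (0:ℝ) (1/2) → quantile μ (s + 1/2) ≤ quantile μ s →
      quantile μ s = c0 ∧ quantile μ (s + 1/2) = c0 := by
    intro s hsI hs
    have hQs : quantile μ s = c0 := by
      rcases le_total s s1 with h | h
      · have h1 : quantile μ s ≤ quantile μ s1 :=
          quantile_monotoneOn (hmemI s hsI) (hmemI s1 hs1I) h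
        have h2 : quantile μ s1 ≤ quantile μ (s + 1/2) :=
          quantile_monotoneOn (hmemI s1 hs1I) (hmemI2 s hsI) (by linarith [hs1I.2, hsI.1])
        rw [hc0]; linarith
      · have h1 : quantile μ s1 ≤ quantile μ s :=
          quantile_monotoneOn (hmemI s1 hs1I) (hmemI s hsI) h
        have h2 : quantile μ s ≤ quantile μ (s1 + 1/2) :=
          quantile_monotoneOn (hmemI s hsI) (hmemI2 s1 hs1I) (by linarith [hsI.2, hs1I.1])
        rw [hc0]; linarith
    refine ⟨hQs, ?_⟩
    have h3 : quantile μ s ≤ quantile μ (s + 1/2) :=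
      quantile_monotoneOn (hmemI s hsI) (hmemI2 s hsI) (by linarith [hsI.1])
    linarith [hQs]
  have hconst : ∀ t, t ∈ Ioo (0:ℝ) 1 → quantile μ t = c0 := by
    intro t ht
    have hlow : c0 ≤ quantile μ t := by
      have hmt : (0:ℝ) < min t (1/2) := lt_min ht.1 (by norm_num)
      obtain ⟨s, hsm, hsg⟩ := hgood (min t (1/2) / 2) (min t (1/2))
        (by linarith) (by linarith) (min_le_right _ _)
      have hsI : s ∈ Ioo (0:ℝ) (1/2) := by
        constructor
        · linarith [hsm.1]
        · exact lt_of_lt_of_le hsm.2 (min_le_right _ _)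
      have := (hval s hsI hsg).1
      rw [← this]
      exact quantile_monotoneOn (hmemI s hsI) ht (le_trans hsm.2.le (min_le_left _ _))
    have hhigh : quantile μ t ≤ c0 := by
      rcases lt_or_ge t (1/2) with h | h
      · obtain ⟨s, hsm, hsg⟩ := hgood t (1/2) ht.1 h le_rfl
        have hsI : s ∈ Ioo (0:ℝ) (1/2) := ⟨by linarith [hsm.1, ht.1], hsm.2⟩
        have := (hval s hsI hsg).1
        rw [← this]
        exact quantile_monotoneOn ht (hmemI s hsI) hsm.1.le
      · obtain ⟨s, hsm, hsg⟩ := hgood (max (t - 1/2) (1/4)) (1/2)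
          (lt_max_of_lt_right (by norm_num)) (by
            apply max_lt
            · linarith [ht.2]
            · norm_num) le_rfl
        have hsI : s ∈ Ioo (0:ℝ) (1/2) := by
          constructor
          · linarith [hsm.1, le_max_right (t - 1/2) (1/4:ℝ)]
          · exact hsm.2
        have := (hval s hsI hsg).2
        rw [← this]
        apply quantile_monotoneOn ht (hmemI2 s hsI)
        have := le_max_left (t - 1/2) (1/4)
        linarith [hsm.1]
    linarith
  refine ⟨c0, ?_⟩
  have hlowm : ∀ x : ℝ, x < c0 → μ (Iic x) = 0 := by
    intro x hx
    have hcd : ∀ t, t ∈ Ioo (0:ℝ) 1 → cdf μ x ≤ t := by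
      intro t ht
      apply cdf_le_of_lt_quantile ht.1 ht.2
      rw [hconst t ht]
      exact hx
    have hcdf0 : cdf μ x = 0 := by
      have hnn := cdf_nonneg (μ := μ) x
      by_contra hne
      have hpos : 0 < cdf μ x := lt_of_le_of_ne hnn (Ne.symm hne)
      have ht : (min (cdf μ x) 2⁻¹)/2 ∈ Ioo (0:ℝ) 1 := by
        constructor
        · have : (0:ℝ) < min (cdf μ x) 2⁻¹ := lt_min hpos (by norm_num)
          positivity
        · have : min (cdf μ x) 2⁻¹ ≤ 2⁻¹ := min_le_right _ _
          linarith
      have := hcd _ ht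
      have h2 : min (cdf μ x) 2⁻¹ ≤ cdf μ x := min_le_left _ _
      linarith
    rw [cdf] at hcdf0
    rcases (ENNReal.toReal_eq_zero_iff _).1 hcdf0 with h | h
    · exact h
    · exact absurd h (measure_ne_top μ _)
  have hhighm : ∀ x : ℝ, c0 < x → μ (Iic x) = 1 := by
    intro x hx
    have hcd : ∀ t, t ∈ Ioo (0:ℝ) 1 → t < cdf μ x := by
      intro t ht
      by_contra hc
      push_neg at hc
      have := le_quantile_of_cdf_le ht.2 hc
      rw [hconst t ht] at this
      linarith
    have hcdf1 : 1 ≤ cdf μ x := by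
      by_contra hc
      push_neg at hc
      have hnn := cdf_nonneg (μ := μ) x
      have ht : (cdf μ x + 1)/2 ∈ Ioo (0:ℝ) 1 := ⟨by linarith, by linarith⟩
      have := hcd _ ht
      linarith
    apply le_antisymm prob_le_one
    rw [show (1:ℝ≥0∞) = ENNReal.ofReal 1 by simp]
    exact ENNReal.ofReal_le_of_le_toReal hcdf1
  have hIio : μ (Iio c0) = 0 := by
    have hset : Iio c0 = ⋃ m : ℕ, Iic (c0 - 1/(m+1)) := by
      ext x
      simp only [mem_Iio, mem_iUnion, mem_Iic]
      constructor
      · intro hx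
        obtain ⟨m, hm⟩ := exists_nat_one_div_lt (show (0:ℝ) < c0 - x by linarith)
        exact ⟨m, by push_cast at hm ⊢; linarith⟩
      · intro ⟨m, hm⟩
        have : (0:ℝ) < 1/((m:ℝ)+1) := by positivity
        linarith
    rw [hset]
    apply measure_iUnion_null
    intro m
    apply hlowm
    have : (0:ℝ) < 1/((m:ℝ)+1) := by positivity
    linarith
  have hIoi : μ (Ioi c0) = 0 := by
    have hset : Ioi c0 = ⋃ m : ℕ, Ioi (c0 + 1/(m+1)) := by
      ext x
      simp only [mem_Ioi, mem_iUnion]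
      constructor
      · intro hx
        obtain ⟨m, hm⟩ := exists_nat_one_div_lt (show (0:ℝ) < x - c0 by linarith)
        exact ⟨m, by push_cast at hm ⊢; linarith⟩
      · intro ⟨m, hm⟩
        have : (0:ℝ) < 1/((m:ℝ)+1) := by positivity
        linarith
    rw [hset]
    apply measure_iUnion_null
    intro m
    have h1 : μ (Iic (c0 + 1/(m+1))) = 1 := by
      apply hhighm
      have : (0:ℝ) < 1/((m:ℝ)+1) := by positivity
      push_cast
      linarith
    have h2 := measure_compl (measurableSet_Iic (a := c0 + 1/((m:ℕ)+1))) (measure_ne_top μ _)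
    rw [compl_Iic, h1, measure_univ] at h2
    rw [h2]
    simp
  have hcompl : μ ({c0}ᶜ) = 0 := by
    rw [← Iio_union_Ioi]
    exact measure_union_null hIio hIoi
  apply Measure.ext
  intro s hs
  rw [Measure.dirac_apply' _ hs]
  by_cases hc : c0 ∈ s
  · rw [Set.indicator_of_mem hc]
    have h1 : μ sᶜ = 0 :=
      measure_mono_null (compl_subset_compl.2 (singleton_subset_iff.2 hc)) hcompl
    have h2 := measure_add_measure_compl (μ := μ) hs
    rw [h1, add_zero, measure_univ] at h2
    rw [h2]
    rfl
  · rw [Set.indicator_of_notMem hc]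
    exact measure_mono_null (subset_compl_singleton_iff.2 hc) hcompl

end Main4
section Final
open Set MeasureTheory Filter Topology
open scoped ENNReal

theorem stmt18 (r : ℝ) (hr : 1 ≤ r) (μ : Measure ℝ) [IsProbabilityMeasure μ]
    (hmom : ∫⁻ x : ℝ, ENNReal.ofReal (|x| ^ r) ∂μ ≠ ⊤)
    (hnd : ∀ c : ℝ, μ ≠ Measure.dirac c) :
    2⁻¹ * ∫⁻ t in Set.Ioo (0 : ℝ) (1 / 2),
          ENNReal.ofReal (quantile μ (t + 1 / 2) - quantile μ t)
        ≤ Filter.atTop.limsup (fun n : ℕ =>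
            (n : ℝ≥0∞) * ⨅ y : {y : Fin n → ℝ // Monotone y}, drE r (unifAtoms n y.1) μ) ∧
      0 < Filter.atTop.limsup (fun n : ℕ =>
            (n : ℝ≥0∞) * ⨅ y : {y : Fin n → ℝ // Monotone y}, drE r (unifAtoms n y.1) μ) := by
  set bseq : ℕ → ℝ≥0∞ := fun n =>
    (n : ℝ≥0∞) * ⨅ y : {y : Fin n → ℝ // Monotone y}, drE r (unifAtoms n y.1) μ with hbseq
  set TV : ℝ≥0∞ := ∫⁻ s, ENNReal.ofReal (min (tau μ s) (1 - tau μ s)) ∂volume with hTV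
  have hb : ∀ i : ℕ,
      2⁻¹ * (∫⁻ s, ENNReal.ofReal (tent ((i:ℝ) * tau μ s)) ∂volume) ≤ bseq i := by
    intro i
    rcases Nat.eq_zero_or_pos i with h0 | hpos
    · subst h0
      have hz : ∀ s : ℝ, ENNReal.ofReal (tent (((0:ℕ):ℝ) * tau μ s)) = 0 := by
        intro s
        have h1 : ((0:ℕ):ℝ) * tau μ s = 0 := by simp
        rw [h1]
        have h2 : tent 0 = 0 := by
          rw [tent, Int.fract_zero, zero_sub, abs_neg,
            abs_of_nonneg (by norm_num : (0:ℝ) ≤ 2⁻¹)]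
          norm_num
        rw [h2]
        simp
      rw [show (∫⁻ s, ENNReal.ofReal (tent (((0:ℕ):ℝ) * tau μ s)) ∂volume) = 0 by
        simp only [hz]; exact lintegral_zero]
      simp
    · have hchain : (ENNReal.ofReal (2*(i:ℝ)))⁻¹ *
          (∫⁻ s, ENNReal.ofReal (tent ((i:ℝ) * tau μ s)) ∂volume)
            ≤ ⨅ y : {y : Fin i → ℝ // Monotone y}, drE r (unifAtoms i y.1) μ :=
        le_iInf (fun y => chain hr hpos y.1 y.2)
      have hi0 : (i:ℝ≥0∞) ≠ 0 := by exact_mod_cast hpos.ne'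
      have hOf : ENNReal.ofReal (2*(i:ℝ)) = 2 * (i:ℝ≥0∞) := by
        rw [ENNReal.ofReal_mul (by norm_num : (0:ℝ) ≤ 2)]
        rw [ENNReal.ofReal_natCast]
        norm_num
      have hkey : (i:ℝ≥0∞) * ((ENNReal.ofReal (2*(i:ℝ)))⁻¹ *
          (∫⁻ s, ENNReal.ofReal (tent ((i:ℝ) * tau μ s)) ∂volume))
            = 2⁻¹ * (∫⁻ s, ENNReal.ofReal (tent ((i:ℝ) * tau μ s)) ∂volume) := by
        rw [hOf, ENNReal.mul_inv (Or.inl (by norm_num)) (Or.inl (by norm_num)), ← mul_assoc,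
          ← mul_assoc, mul_comm (i:ℝ≥0∞) (2:ℝ≥0∞)⁻¹, mul_assoc (2:ℝ≥0∞)⁻¹,
          ENNReal.mul_inv_cancel hi0 (by simp), mul_one]
      calc 2⁻¹ * (∫⁻ s, ENNReal.ofReal (tent ((i:ℝ) * tau μ s)) ∂volume)
          = (i:ℝ≥0∞) * ((ENNReal.ofReal (2*(i:ℝ)))⁻¹ *
              (∫⁻ s, ENNReal.ofReal (tent ((i:ℝ) * tau μ s)) ∂volume)) := hkey.symm
        _ ≤ bseq i := mul_le_mul_right hchain _
  have hM : ∀ M : ℕ, 2⁻¹ * TV ≤ ⨆ i, ⨆ (_ : M ≤ i), bseq i := by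
    intro M
    calc 2⁻¹ * TV
        ≤ 2⁻¹ * ⨆ i, ⨆ (_ : M ≤ i), ∫⁻ s, ENNReal.ofReal (tent ((i:ℝ) * tau μ s)) ∂volume :=
          mul_le_mul_right (cesaro M) _
      _ = ⨆ i, ⨆ (_ : M ≤ i), 2⁻¹ * ∫⁻ s, ENNReal.ofReal (tent ((i:ℝ) * tau μ s)) ∂volume := by
          rw [ENNReal.mul_iSup]
          apply iSup_congr
          intro i
          rw [ENNReal.mul_iSup]
      _ ≤ ⨆ i, ⨆ (_ : M ≤ i), bseq i := by
          apply iSup_mono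
          intro i
          apply iSup_mono
          intro _
          exact hb i
  have hlimsup : 2⁻¹ * TV ≤ Filter.atTop.limsup bseq := by
    rw [limsup_eq_iInf_iSup_of_nat]
    exact le_iInf hM
  have hT' : (∫⁻ t in Set.Ioo (0 : ℝ) (1 / 2),
      ENNReal.ofReal (quantile μ (t + 1 / 2) - quantile μ t)) ≤ TV := Tprime_le_TV
  have hpart1 : 2⁻¹ * ∫⁻ t in Set.Ioo (0 : ℝ) (1 / 2),
      ENNReal.ofReal (quantile μ (t + 1 / 2) - quantile μ t) ≤ Filter.atTop.limsup bseq :=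
    le_trans (mul_le_mul_right hT' _) hlimsup
  refine ⟨hpart1, ?_⟩
  have hTne : (∫⁻ t in Set.Ioo (0 : ℝ) (1 / 2),
      ENNReal.ofReal (quantile μ (t + 1 / 2) - quantile μ t)) ≠ 0 := by
    intro h
    obtain ⟨c, hc⟩ := dirac_of_T0 h
    exact hnd c hc
  have hpos : 0 < 2⁻¹ * ∫⁻ t in Set.Ioo (0 : ℝ) (1 / 2),
      ENNReal.ofReal (quantile μ (t + 1 / 2) - quantile μ t) :=
    ENNReal.mul_pos (by norm_num) hTne
  exact lt_of_lt_of_le hpos hpart1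

end Final
end

section
/- Given r ≥ 1 and any sequence (a_n) of non-negative reals with a_n → 0, there exists a Borel probability measure μ on ℝ with finite r-th moment such that for every n, the best n-point L^r-Kantorovich approximation error satisfies inf{d_r(ν, μ) : ν a probability measure supported on at most n points} ≥ a_n. -/
open Set MeasureTheory Filter
open scoped ENNReal

namespace Stmt19X

noncomputable def pp (j : ℕ) : ℝ := (2⁻¹ : ℝ) ^ (j+1)

noncomputable def vv (r A : ℝ) (N : ℕ → ℕ) (k : ℕ) : ℝ :=
  (2*A*(2⁻¹:ℝ)^k) ^ r / ((N (k+1) - N k : ℕ) : ℝ)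

noncomputable def KK (N : ℕ → ℕ) (j : ℕ) : ℕ := sInf {k | j < N (k+1)}

noncomputable def ww (r A : ℝ) (N : ℕ → ℕ) (j : ℕ) : ℝ := vv r A N (KK N j)

noncomputable def gg (r A : ℝ) (N : ℕ → ℕ) (j : ℕ) : ℝ := (ww r A N j * 2 ^ (j+1)) ^ (1/r)

noncomputable def uu (r A : ℝ) (N : ℕ → ℕ) (j : ℕ) : ℝ := 2 * ∑ k ∈ Finset.range j, gg r A N k

noncomputable def xx (r A : ℝ) (N : ℕ → ℕ) (j : ℕ) : ℝ := uu r A N j + gg r A N j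

noncomputable def mu (r A : ℝ) (N : ℕ → ℕ) : Measure ℝ :=
  Measure.sum fun j => ENNReal.ofReal (pp j) • Measure.dirac (xx r A N j)

noncomputable def Wtot (r A : ℝ) : ℝ := (2*A) ^ r * (1 - (2⁻¹:ℝ) ^ r)⁻¹

lemma pp_pos (j : ℕ) : 0 < pp j := by unfold pp; positivity

lemma sum_pp (j : ℕ) : ∑ k ∈ Finset.range j, pp k = 1 - (2⁻¹:ℝ)^j := by
  induction j with
  | zero => simp
  | succ j ih => rw [Finset.sum_range_succ, ih, pp]; ring

lemma pigeon (w : ℕ → ℝ) (hw : Antitone w) (hw0 : ∀ i, 0 ≤ w i) :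
    ∀ n : ℕ, ∀ J : Finset ℕ, J.card ≤ n →
      ∑ j ∈ J, w j ≤ ∑ i ∈ Finset.range n, w i := by
  intro n
  induction n with
  | zero => intro J hJ; simp [Finset.card_eq_zero.mp (Nat.le_zero.mp hJ)]
  | succ n ih =>
    intro J hJ
    by_cases hc : J.card ≤ n
    · calc ∑ j ∈ J, w j ≤ ∑ i ∈ Finset.range n, w i := ih J hc
        _ ≤ ∑ i ∈ Finset.range (n+1), w i := by
            rw [Finset.sum_range_succ]; linarith [hw0 n]
    · have hcard : J.card = n + 1 := le_antisymm hJ (not_le.mp hc)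
      have hne : J.Nonempty := Finset.card_pos.mp (by omega)
      set m := J.max' hne with hm
      have hmJ : m ∈ J := J.max'_mem hne
      have hsub : J ⊆ Finset.range (m+1) := by
        intro j hj
        simpa [Finset.mem_range, Nat.lt_succ_iff] using J.le_max' j hj
      have hmn : n ≤ m := by
        have := Finset.card_le_card hsub
        simpa [hcard, Finset.card_range] using this
      have herase : (J.erase m).card ≤ n := by
        rw [Finset.card_erase_of_mem hmJ, hcard]; omega
      calc ∑ j ∈ J, w j = ∑ j ∈ J.erase m, w j + w m :=
            (Finset.sum_erase_add J w hmJ).symm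
        _ ≤ ∑ i ∈ Finset.range n, w i + w n := by
            have := ih (J.erase m) herase
            have := hw hmn
            linarith
        _ = ∑ i ∈ Finset.range (n+1), w i := (Finset.sum_range_succ w n).symm


lemma tsum_ofReal_le (f : ℕ → ℝ) (hf : ∀ n, 0 ≤ f n) (C : ℝ)
    (h : ∀ n, ∑ i ∈ Finset.range n, f i ≤ C) :
    ∑' j, ENNReal.ofReal (f j) ≤ ENNReal.ofReal C := by
  rw [ENNReal.tsum_eq_iSup_sum]
  refine iSup_le fun s => ?_
  obtain ⟨n, hn⟩ := s.exists_nat_subset_range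
  calc ∑ j ∈ s, ENNReal.ofReal (f j)
      ≤ ∑ j ∈ Finset.range n, ENNReal.ofReal (f j) :=
        Finset.sum_le_sum_of_subset_of_nonneg hn (fun _ _ _ => by simp)
    _ = ENNReal.ofReal (∑ j ∈ Finset.range n, f j) :=
        (ENNReal.ofReal_sum_of_nonneg (fun i _ => hf i)).symm
    _ ≤ ENNReal.ofReal C := ENNReal.ofReal_le_ofReal (h n)

lemma sum_half_index (f : ℕ → ℝ) (hf : ∀ n, 0 ≤ f n) (C : ℝ)
    (h : ∀ n, ∑ i ∈ Finset.range n, f i ≤ C) (hC : 0 ≤ C) :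
    ∀ n, ∑ j ∈ Finset.range n, f ((j+1)/2) ≤ 2 * C := by
  have key : ∀ M, ∑ j ∈ Finset.range (2*M), f ((j+1)/2)
      ≤ ∑ i ∈ Finset.range M, f i + ∑ i ∈ Finset.range (M+1), f i := by
    intro M
    induction M with
    | zero => simpa using hf 0
    | succ M ih =>
      have e1 : 2*(M+1) = (2*M) + 1 + 1 := by ring
      rw [e1, Finset.sum_range_succ, Finset.sum_range_succ]
      have e2 : ((2*M)+1)/2 = M := by omega
      have e3 : ((2*M)+1+1)/2 = M+1 := by omega
      rw [e2, e3, Finset.sum_range_succ f M, Finset.sum_range_succ f (M+1)]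
      linarith
  intro n
  have h1 : ∑ j ∈ Finset.range n, f ((j+1)/2) ≤ ∑ j ∈ Finset.range (2*n), f ((j+1)/2) := by
    apply Finset.sum_le_sum_of_subset_of_nonneg
    · exact Finset.range_subset_range.mpr (by omega)
    · exact fun i _ _ => hf _
  calc ∑ j ∈ Finset.range n, f ((j+1)/2) ≤ _ := h1
    _ ≤ ∑ i ∈ Finset.range n, f i + ∑ i ∈ Finset.range (n+1), f i := key n
    _ ≤ 2 * C := by have := h n; have := h (n+1); linarith


lemma quantile_mem_of_support (ν : Measure ℝ) [IsProbabilityMeasure ν]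
    (s : Finset ℝ) (hs : s.Nonempty) (hν : ν ((↑s : Set ℝ)ᶜ) = 0)
    {t : ℝ} (ht0 : 0 < t) (ht1 : t < 1) : quantile ν t ∈ s := by
  set A : Set ℝ := {x | cdf ν x ≤ t} with hA
  -- empty intersection with s gives cdf zero
  have hzero : ∀ x : ℝ, (∀ y ∈ s, ¬ y ≤ x) → cdf ν x ≤ t := by
    intro x hx
    have : Iic x ⊆ (↑s : Set ℝ)ᶜ := by
      intro z hz hzs
      exact hx z hzs hz
    have : ν (Iic x) = 0 := measure_mono_null this hν
    simp [cdf, this, ht0.le]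
  -- A is nonempty
  have hAne : A.Nonempty := by
    refine ⟨s.min' hs - 1, hzero _ ?_⟩
    intro y hy
    have := s.min'_le y hy
    linarith
  -- cdf is one above max
  have hub : ∀ x ∈ A, x ≤ s.max' hs := by
    intro x hx
    by_contra hmax
    push_neg at hmax
    have hsub : (↑s : Set ℝ) ⊆ Iic x := by
      intro y hy
      exact le_of_lt (lt_of_le_of_lt (s.le_max' y hy) hmax)
    have h1 : (1:ℝ≥0∞) ≤ ν (Iic x) := by
      have : ν (↑s : Set ℝ) = 1 := by
        have h := measure_add_measure_compl (μ := ν) (s.measurableSet : MeasurableSet (↑s : Set ℝ))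
        rw [hν, add_zero] at h
        simpa using h
      calc (1:ℝ≥0∞) = ν (↑s : Set ℝ) := this.symm
        _ ≤ ν (Iic x) := measure_mono hsub
    have : (1:ℝ) ≤ cdf ν x := by
      have := ENNReal.toReal_mono (measure_ne_top ν (Iic x)) h1
      simpa [cdf] using this
    have : cdf ν x ≤ t := hx
    linarith
  have hbdd : BddAbove A := ⟨s.max' hs, hub⟩
  -- monotone-ish bound: cdf x' ≤ cdf x if the gap misses s
  have hstep : ∀ x x' : ℝ, x ≤ x' → (∀ y ∈ s, ¬ (x < y ∧ y ≤ x')) →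
      cdf ν x' ≤ cdf ν x := by
    intro x x' hxx hgap
    have hsplit : Iic x' = Iic x ∪ Ioc x x' := (Set.Iic_union_Ioc_eq_Iic hxx).symm
    have hnull : ν (Ioc x x') = 0 := by
      refine measure_mono_null ?_ hν
      intro z hz hzs
      exact hgap z hzs ⟨hz.1, hz.2⟩
    have : ν (Iic x') ≤ ν (Iic x) := by
      rw [hsplit]
      calc ν (Iic x ∪ Ioc x x') ≤ ν (Iic x) + ν (Ioc x x') := measure_union_le _ _
        _ = ν (Iic x) := by rw [hnull, add_zero]
    exact ENNReal.toReal_mono (measure_ne_top ν _) this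
  set z := sSup A with hz
  change z ∈ s
  by_contra hzs
  -- the elements of s above z
  have hzmax : z ≤ s.max' hs := csSup_le hAne hub
  have hzltmax : z < s.max' hs := lt_of_le_of_ne hzmax (by
    intro h; exact hzs (h.symm ▸ s.max'_mem hs))
  have hs' : (s.filter (fun u => z < u)).Nonempty :=
    ⟨s.max' hs, Finset.mem_filter.mpr ⟨s.max'_mem hs, hzltmax⟩⟩
  set y₂ := (s.filter (fun u => z < u)).min' hs' with hy₂
  have hzy₂ : z < y₂ := (Finset.mem_filter.mp ((s.filter _).min'_mem hs')).2
  have hy₂s : ∀ y ∈ s, z < y → y₂ ≤ y := fun y hy hzy =>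
    Finset.min'_le _ y (Finset.mem_filter.mpr ⟨hy, hzy⟩)
  set x' := (z + y₂)/2 with hx'
  have hzx' : z < x' := by rw [hx']; linarith
  have hx'y₂ : x' < y₂ := by rw [hx']; linarith
  have hx'A : x' ∈ A := by
    by_cases hcase : (s.filter (fun u => u ≤ z)).Nonempty
    · -- there is a point of s below z
      set y₁ := (s.filter (fun u => u ≤ z)).max' hcase with hy₁
      have hy₁z : y₁ ≤ z := (Finset.mem_filter.mp ((s.filter _).max'_mem hcase)).2
      have hy₁s : y₁ ∈ s := (Finset.mem_filter.mp ((s.filter _).max'_mem hcase)).1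
      have hy₁lt : y₁ < z := lt_of_le_of_ne hy₁z (fun h => hzs (h ▸ hy₁s))
      obtain ⟨xa, hxaA, hxay₁⟩ := exists_lt_of_lt_csSup hAne (hz ▸ hy₁lt)
      have hxaz : xa ≤ z := le_csSup hbdd hxaA
      have : cdf ν x' ≤ cdf ν xa := by
        refine hstep xa x' (by linarith) ?_
        intro y hy ⟨h1, h2⟩
        by_cases hyz : y ≤ z
        · have hmem : y ∈ s.filter (fun u => u ≤ z) := Finset.mem_filter.mpr ⟨hy, hyz⟩
          have hle : y ≤ y₁ := hy₁ ▸ Finset.le_max' _ y hmem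
          linarith
        · push_neg at hyz
          have := hy₂s y hy hyz
          linarith
      exact le_trans this hxaA
    · -- all points of s are above z, even above y₂
      refine hzero _ ?_
      intro y hy hyx'
      by_cases hyz : y ≤ z
      · exact hcase ⟨y, Finset.mem_filter.mpr ⟨hy, hyz⟩⟩
      · push_neg at hyz
        have := hy₂s y hy hyz
        linarith
  have : x' ≤ z := le_csSup hbdd hx'A
  linarith


section Construction

variable {r A : ℝ} {N : ℕ → ℕ}

lemma rpos (hr : 1 ≤ r) : 0 < r := lt_of_lt_of_le one_pos hr

lemma N_mono (hN1 : ∀ k, 2 * N k + 1 ≤ N (k+1)) : StrictMono N :=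
  strictMono_nat_of_lt_succ (fun k => by have := hN1 k; omega)

lemma N_le_self (hN1 : ∀ k, 2 * N k + 1 ≤ N (k+1)) (k : ℕ) : k ≤ N k :=
  (N_mono hN1).le_apply

lemma KK_lt (hN1 : ∀ k, 2 * N k + 1 ≤ N (k+1)) (j : ℕ) : j < N (KK N j + 1) := by
  have hne : {k | j < N (k+1)}.Nonempty :=
    ⟨j, lt_of_lt_of_le (by omega) (N_le_self hN1 (j+1))⟩
  exact Nat.sInf_mem hne

lemma KK_le (hN0 : N 0 = 0) (j : ℕ) : N (KK N j) ≤ j := by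
  rcases Nat.eq_zero_or_pos (KK N j) with h | h
  · rw [h, hN0]; omega
  · by_contra hc
    push_neg at hc
    have hmem : (KK N j - 1) ∈ {k | j < N (k+1)} := by
      simp only [Set.mem_setOf_eq]
      have e : KK N j - 1 + 1 = KK N j := by omega
      rw [e]; exact hc
    have h2 : KK N j ≤ KK N j - 1 := Nat.sInf_le hmem
    omega

lemma KK_eq (hN1 : ∀ k, 2 * N k + 1 ≤ N (k+1)) {k j : ℕ}
    (h1 : N k ≤ j) (h2 : j < N (k+1)) : KK N j = k := by
  refine le_antisymm (Nat.sInf_le h2) ?_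
  by_contra hc
  push_neg at hc
  have h3 : KK N j + 1 ≤ k := hc
  have h4 : N (KK N j + 1) ≤ N k := (N_mono hN1).monotone h3
  have h5 := KK_lt hN1 j
  omega

lemma KK_mono (hN1 : ∀ k, 2 * N k + 1 ≤ N (k+1)) : Monotone (KK N) := by
  intro i j hij
  exact Nat.sInf_le (lt_of_le_of_lt hij (KK_lt hN1 j))

lemma L_pos (hN1 : ∀ k, 2 * N k + 1 ≤ N (k+1)) (k : ℕ) : 0 < N (k+1) - N k := by
  have := hN1 k; omega

lemma L_mono (hN1 : ∀ k, 2 * N k + 1 ≤ N (k+1)) (k : ℕ) :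
    N (k+1) - N k ≤ N (k+2) - N (k+1) := by
  have h1 := hN1 k
  have h2 := hN1 (k+1)
  have e : k + 1 + 1 = k + 2 := rfl
  rw [e] at h2
  omega

lemma base_pos (hA : 1 ≤ A) (k : ℕ) : (0:ℝ) < 2*A*(2⁻¹:ℝ)^k := by positivity

lemma vv_pos (hA : 1 ≤ A) (hN1 : ∀ k, 2 * N k + 1 ≤ N (k+1)) (k : ℕ) : 0 < vv r A N k := by
  apply div_pos (Real.rpow_pos_of_pos (base_pos hA k) r)
  exact_mod_cast L_pos hN1 k

lemma vv_anti (hr : 1 ≤ r) (hA : 1 ≤ A) (hN1 : ∀ k, 2 * N k + 1 ≤ N (k+1)) :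
    Antitone (vv r A N) := by
  apply antitone_nat_of_succ_le
  intro k
  rw [vv, vv]
  apply div_le_div₀ (le_of_lt (Real.rpow_pos_of_pos (base_pos hA k) r))
  · apply Real.rpow_le_rpow (le_of_lt (base_pos hA (k+1)))
    · have h : (2⁻¹:ℝ)^(k+1) ≤ (2⁻¹:ℝ)^k :=
        pow_le_pow_of_le_one (by norm_num) (by norm_num) (by omega)
      nlinarith
    · linarith
  · exact_mod_cast L_pos hN1 k
  · have e : k + 1 + 1 = k + 2 := rfl
    exact_mod_cast e ▸ L_mono hN1 k

lemma ww_pos (hA : 1 ≤ A) (hN1 : ∀ k, 2 * N k + 1 ≤ N (k+1)) (j : ℕ) : 0 < ww r A N j :=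
  vv_pos hA hN1 _

lemma ww_anti (hr : 1 ≤ r) (hA : 1 ≤ A) (hN1 : ∀ k, 2 * N k + 1 ≤ N (k+1)) :
    Antitone (ww r A N) := fun i j hij => vv_anti hr hA hN1 (KK_mono hN1 hij)

lemma ww_block (hN1 : ∀ k, 2 * N k + 1 ≤ N (k+1)) {k j : ℕ}
    (h1 : N k ≤ j) (h2 : j < N (k+1)) : ww r A N j = vv r A N k := by
  rw [ww, KK_eq hN1 h1 h2]

lemma sum_block (hN1 : ∀ k, 2 * N k + 1 ≤ N (k+1)) (k : ℕ) :
    ∑ j ∈ Finset.Ico (N k) (N (k+1)), ww r A N j = (2*A*(2⁻¹:ℝ)^k) ^ r := by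
  have hcongr : ∀ j ∈ Finset.Ico (N k) (N (k+1)), ww r A N j = vv r A N k := by
    intro j hj
    rw [Finset.mem_Ico] at hj
    exact ww_block hN1 hj.1 hj.2
  rw [Finset.sum_congr rfl hcongr, Finset.sum_const, Nat.card_Ico, nsmul_eq_mul, vv]
  have hL : ((N (k+1) - N k : ℕ) : ℝ) ≠ 0 := by
    exact_mod_cast Nat.pos_iff_ne_zero.mp (L_pos hN1 k)
  field_simp

lemma sum_upto (hN0 : N 0 = 0) (hN1 : ∀ k, 2 * N k + 1 ≤ N (k+1)) (k : ℕ) :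
    ∑ j ∈ Finset.range (N k), ww r A N j = ∑ i ∈ Finset.range k, (2*A*(2⁻¹:ℝ)^i) ^ r := by
  induction k with
  | zero => rw [hN0]; simp
  | succ k ih =>
    rw [← Finset.sum_range_add_sum_Ico (ww r A N) ((N_mono hN1).monotone (Nat.le_succ k)),
      ih, sum_block hN1, Finset.sum_range_succ]

lemma rpow_nat_comm {c : ℝ} (hc : 0 ≤ c) (s : ℝ) (i : ℕ) : (c ^ i) ^ s = (c ^ s) ^ i := by
  rw [← Real.rpow_natCast c i, ← Real.rpow_natCast (c ^ s) i, ← Real.rpow_mul hc,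
    ← Real.rpow_mul hc, mul_comm]

lemma halfr_lt_one (hr : 1 ≤ r) : (2⁻¹:ℝ) ^ r < 1 :=
  Real.rpow_lt_one (by norm_num) (by norm_num) (rpos hr)

lemma halfr_pos : (0:ℝ) < (2⁻¹:ℝ) ^ r := Real.rpow_pos_of_pos (by norm_num) r

lemma geom_le {c : ℝ} (h0 : 0 ≤ c) (h1 : c < 1) (m : ℕ) :
    ∑ i ∈ Finset.range m, c ^ i ≤ (1 - c)⁻¹ := by
  have h1c : 0 < 1 - c := by linarith
  rw [geom_sum_eq (by linarith : c ≠ 1) m]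
  rw [show c ^ m - 1 = -(1 - c ^ m) by ring, show c - 1 = -(1 - c) by ring,
    neg_div_neg_eq, div_le_iff₀ h1c, inv_mul_cancel₀ (ne_of_gt h1c)]
  have := pow_nonneg h0 m
  linarith

lemma ww_partial (hr : 1 ≤ r) (hA : 1 ≤ A) (hN0 : N 0 = 0)
    (hN1 : ∀ k, 2 * N k + 1 ≤ N (k+1)) (M : ℕ) :
    ∑ j ∈ Finset.range M, ww r A N j ≤ Wtot r A := by
  have h1 : ∑ j ∈ Finset.range M, ww r A N j ≤ ∑ j ∈ Finset.range (N M), ww r A N j := by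
    apply Finset.sum_le_sum_of_subset_of_nonneg
    · exact Finset.range_subset_range.mpr (N_le_self hN1 M)
    · exact fun i _ _ => (ww_pos hA hN1 i).le
  rw [sum_upto hN0 hN1] at h1
  have h2 : ∀ i : ℕ, (2*A*(2⁻¹:ℝ)^i) ^ r = (2*A)^r * ((2⁻¹:ℝ)^r)^i := by
    intro i
    rw [Real.mul_rpow (by positivity) (by positivity), rpow_nat_comm (by norm_num) r i]
  rw [Finset.sum_congr rfl (fun i _ => h2 i), ← Finset.mul_sum] at h1
  calc ∑ j ∈ Finset.range M, ww r A N j ≤ _ := h1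
    _ ≤ (2*A)^r * (1 - (2⁻¹:ℝ)^r)⁻¹ := by
        apply mul_le_mul_of_nonneg_left _ (by positivity)
        exact geom_le halfr_pos.le (halfr_lt_one hr) _
    _ = Wtot r A := rfl


lemma gg_pos (hA : 1 ≤ A) (hN1 : ∀ k, 2 * N k + 1 ≤ N (k+1)) (j : ℕ) : 0 < gg r A N j := by
  apply Real.rpow_pos_of_pos
  have := ww_pos (r := r) hA hN1 j
  positivity

lemma gg_pow (hr : 1 ≤ r) (hA : 1 ≤ A) (hN1 : ∀ k, 2 * N k + 1 ≤ N (k+1)) (j : ℕ) :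
    gg r A N j ^ r * pp j = ww r A N j := by
  have hw := ww_pos (r := r) hA hN1 j
  have hb : (0:ℝ) ≤ ww r A N j * 2 ^ (j+1) := by positivity
  have h1 : gg r A N j ^ r = ww r A N j * 2 ^ (j+1) := by
    rw [gg, ← Real.rpow_mul hb, one_div, inv_mul_cancel₀ (ne_of_gt (rpos hr)), Real.rpow_one]
  rw [h1, pp, mul_assoc, ← mul_pow]
  norm_num

lemma uu_mono (hA : 1 ≤ A) (hN1 : ∀ k, 2 * N k + 1 ≤ N (k+1)) : Monotone (uu r A N) := by
  intro i j hij
  unfold uu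
  have : ∑ k ∈ Finset.range i, gg r A N k ≤ ∑ k ∈ Finset.range j, gg r A N k := by
    apply Finset.sum_le_sum_of_subset_of_nonneg (Finset.range_subset_range.mpr hij)
    exact fun k _ _ => (gg_pos hA hN1 k).le
  linarith

lemma uu_succ (j : ℕ) : uu r A N (j+1) = uu r A N j + 2 * gg r A N j := by
  unfold uu
  rw [Finset.sum_range_succ]
  ring

lemma uu_nonneg (hA : 1 ≤ A) (hN1 : ∀ k, 2 * N k + 1 ≤ N (k+1)) (j : ℕ) : 0 ≤ uu r A N j := by
  unfold uu
  have : (0:ℝ) ≤ ∑ k ∈ Finset.range j, gg r A N k :=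
    Finset.sum_nonneg (fun k _ => (gg_pos hA hN1 k).le)
  linarith

lemma xx_nonneg (hA : 1 ≤ A) (hN1 : ∀ k, 2 * N k + 1 ≤ N (k+1)) (j : ℕ) : 0 ≤ xx r A N j := by
  have := uu_nonneg (r := r) hA hN1 j
  have := gg_pos (r := r) hA hN1 j
  unfold xx; linarith

lemma xx_sep (hA : 1 ≤ A) (hN1 : ∀ k, 2 * N k + 1 ≤ N (k+1)) {i j : ℕ} (hij : i < j) :
    xx r A N i + gg r A N i ≤ xx r A N j - gg r A N j := by
  have h1 : xx r A N i + gg r A N i = uu r A N (i+1) := by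
    rw [uu_succ, xx]; ring
  have h2 : xx r A N j - gg r A N j = uu r A N j := by rw [xx]; ring
  rw [h1, h2]
  exact uu_mono hA hN1 hij

lemma xx_strictMono (hA : 1 ≤ A) (hN1 : ∀ k, 2 * N k + 1 ≤ N (k+1)) :
    StrictMono (xx r A N) := by
  intro i j hij
  have h1 := xx_sep (r := r) hA hN1 hij
  have h2 := gg_pos (r := r) hA hN1 i
  have h3 := gg_pos (r := r) hA hN1 j
  linarith

/-! ### the measure mu -/

lemma pp_summable : Summable pp := by
  have h : Summable (fun j : ℕ => (2⁻¹:ℝ) * 2⁻¹ ^ j) :=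
    (summable_geometric_of_lt_one (by norm_num) (by norm_num)).mul_left _
  exact h.congr (fun j => by rw [pp, pow_succ]; ring)

lemma pp_tsum : ∑' j : ℕ, pp j = 1 := by
  calc ∑' j : ℕ, pp j = ∑' j : ℕ, (2⁻¹:ℝ) * 2⁻¹ ^ j :=
        tsum_congr (fun j => by rw [pp, pow_succ]; ring)
    _ = 2⁻¹ * (1 - 2⁻¹)⁻¹ := by
        rw [tsum_mul_left, tsum_geometric_of_lt_one (by norm_num) (by norm_num)]
    _ = 1 := by norm_num

lemma mu_prob (hA : 1 ≤ A) (hN1 : ∀ k, 2 * N k + 1 ≤ N (k+1)) :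
    IsProbabilityMeasure (mu r A N) := by
  constructor
  rw [mu, Measure.sum_apply _ MeasurableSet.univ]
  have h1 : ∀ j : ℕ, (ENNReal.ofReal (pp j) • Measure.dirac (xx r A N j)) Set.univ
      = ENNReal.ofReal (pp j) := by
    intro j
    simp [Measure.smul_apply]
  rw [tsum_congr h1, ← ENNReal.ofReal_tsum_of_nonneg (fun j => (pp_pos j).le) pp_summable,
    pp_tsum, ENNReal.ofReal_one]

lemma mu_apply_Iic (r A : ℝ) (N : ℕ → ℕ) (y : ℝ) :
    mu r A N (Set.Iic y) =
      ∑' j : ℕ, ENNReal.ofReal (pp j) * (Set.Iic y).indicator 1 (xx r A N j) := by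
  rw [mu, Measure.sum_apply _ measurableSet_Iic]
  refine tsum_congr (fun j => ?_)
  rw [Measure.smul_apply, Measure.dirac_apply' _ measurableSet_Iic, smul_eq_mul]

lemma mu_Iic_le (hA : 1 ≤ A) (hN1 : ∀ k, 2 * N k + 1 ≤ N (k+1)) {j : ℕ} {y : ℝ}
    (hy : y < xx r A N j) :
    mu r A N (Set.Iic y) ≤ ENNReal.ofReal (1 - (2⁻¹:ℝ)^j) := by
  rw [mu_apply_Iic]
  have hle : ∀ k : ℕ, ENNReal.ofReal (pp k) * (Set.Iic y).indicator 1 (xx r A N k)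
      ≤ Set.indicator (↑(Finset.range j) : Set ℕ) (fun k => ENNReal.ofReal (pp k)) k := by
    intro k
    by_cases hk : xx r A N k ≤ y
    · have hkj : k < j := by
        by_contra hc
        push_neg at hc
        have : xx r A N j ≤ xx r A N k := (xx_strictMono hA hN1).monotone hc
        linarith
      have hR : Set.indicator (↑(Finset.range j) : Set ℕ)
          (fun k => ENNReal.ofReal (pp k)) k = ENNReal.ofReal (pp k) :=
        Set.indicator_of_mem (by simpa using hkj) _
      have hL : (Set.Iic y).indicator (1 : ℝ → ℝ≥0∞) (xx r A N k) = 1 := by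
        rw [Set.indicator_of_mem (by simpa using hk), Pi.one_apply]
      rw [hR, hL, mul_one]
    · rw [Set.indicator_of_notMem (by simpa using hk : xx r A N k ∉ Set.Iic y), mul_zero]
      simp
  calc (∑' k : ℕ, ENNReal.ofReal (pp k) * (Set.Iic y).indicator 1 (xx r A N k))
      ≤ ∑' k : ℕ, Set.indicator (↑(Finset.range j) : Set ℕ)
          (fun k => ENNReal.ofReal (pp k)) k := ENNReal.tsum_le_tsum hle
    _ = ∑ k ∈ Finset.range j, ENNReal.ofReal (pp k) := by
        rw [tsum_eq_sum (s := Finset.range j)]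
        · exact Finset.sum_congr rfl (fun k hk => Set.indicator_of_mem (by simpa using hk) _)
        · intro k hk
          exact Set.indicator_of_notMem (by simpa using hk) _
    _ = ENNReal.ofReal (∑ k ∈ Finset.range j, pp k) :=
        (ENNReal.ofReal_sum_of_nonneg (fun k _ => (pp_pos k).le)).symm
    _ = ENNReal.ofReal (1 - (2⁻¹:ℝ)^j) := by rw [sum_pp]

lemma mu_Iic_ge (hA : 1 ≤ A) (hN1 : ∀ k, 2 * N k + 1 ≤ N (k+1)) {j : ℕ} {y : ℝ}
    (hy : xx r A N j ≤ y) :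
    ENNReal.ofReal (1 - (2⁻¹:ℝ)^(j+1)) ≤ mu r A N (Set.Iic y) := by
  rw [mu_apply_Iic]
  calc ENNReal.ofReal (1 - (2⁻¹:ℝ)^(j+1))
      = ∑ k ∈ Finset.range (j+1), ENNReal.ofReal (pp k) := by
        rw [← sum_pp, ENNReal.ofReal_sum_of_nonneg (fun k _ => (pp_pos k).le)]
    _ = ∑ k ∈ Finset.range (j+1),
          ENNReal.ofReal (pp k) * (Set.Iic y).indicator 1 (xx r A N k) := by
        refine Finset.sum_congr rfl (fun k hk => ?_)
        have hkj : k ≤ j := by simpa [Nat.lt_succ_iff] using hk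
        have : xx r A N k ≤ y :=
          le_trans ((xx_strictMono hA hN1).monotone hkj) hy
        rw [Set.indicator_of_mem (by simpa using this), Pi.one_apply, mul_one]
    _ ≤ ∑' k : ℕ, ENNReal.ofReal (pp k) * (Set.Iic y).indicator 1 (xx r A N k) :=
        ENNReal.sum_le_tsum _

lemma cdf_mu_le (hA : 1 ≤ A) (hN1 : ∀ k, 2 * N k + 1 ≤ N (k+1)) {j : ℕ} {y : ℝ}
    (hy : y < xx r A N j) : cdf (mu r A N) y ≤ 1 - (2⁻¹:ℝ)^j := by
  have h := mu_Iic_le hA hN1 hy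
  have := ENNReal.toReal_mono ENNReal.ofReal_ne_top h
  rw [ENNReal.toReal_ofReal (by
    have := pow_le_one₀ (by norm_num : (0:ℝ) ≤ 2⁻¹) (by norm_num : (2⁻¹:ℝ) ≤ 1) (n := j)
    linarith : (0:ℝ) ≤ 1 - (2⁻¹:ℝ)^j)] at this
  exact this

lemma cdf_mu_ge (hA : 1 ≤ A) (hN1 : ∀ k, 2 * N k + 1 ≤ N (k+1)) {j : ℕ} {y : ℝ}
    (hy : xx r A N j ≤ y) : 1 - (2⁻¹:ℝ)^(j+1) ≤ cdf (mu r A N) y := by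
  have h := mu_Iic_ge hA hN1 hy
  haveI := mu_prob (r := r) hA hN1
  have h2 := ENNReal.toReal_mono (measure_ne_top (mu r A N) (Set.Iic y)) h
  rw [ENNReal.toReal_ofReal (by
    have := pow_le_one₀ (by norm_num : (0:ℝ) ≤ 2⁻¹) (by norm_num : (2⁻¹:ℝ) ≤ 1) (n := j+1)
    linarith : (0:ℝ) ≤ 1 - (2⁻¹:ℝ)^(j+1))] at h2
  exact h2

lemma quantile_mu (hA : 1 ≤ A) (hN1 : ∀ k, 2 * N k + 1 ≤ N (k+1)) {j : ℕ} {t : ℝ}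
    (ht1 : 1 - (2⁻¹:ℝ)^j ≤ t) (ht2 : t < 1 - (2⁻¹:ℝ)^(j+1)) :
    quantile (mu r A N) t = xx r A N j := by
  have hset : {y : ℝ | cdf (mu r A N) y ≤ t} = Set.Iio (xx r A N j) := by
    ext y
    simp only [Set.mem_setOf_eq, Set.mem_Iio]
    constructor
    · intro h
      by_contra hc
      push_neg at hc
      have := cdf_mu_ge hA hN1 hc
      linarith
    · intro h
      exact le_trans (cdf_mu_le hA hN1 h) ht1
  rw [quantile, hset, csSup_Iio]

/-! ### moment bound -/


lemma gg_eq (hr : 1 ≤ r) (hA : 1 ≤ A) (hN1 : ∀ k, 2 * N k + 1 ≤ N (k+1)) (k : ℕ) :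
    gg r A N k = (ww r A N k) ^ (1/r) * ((2:ℝ)^(1/r)) ^ (k+1) := by
  rw [gg, Real.mul_rpow (ww_pos hA hN1 k).le (by positivity), rpow_nat_comm (by norm_num) (1/r)]

lemma q_gt_one (hr : 1 ≤ r) : 1 < (2:ℝ)^(1/r) := by
  have h0 : (2:ℝ)^(0:ℝ) < (2:ℝ)^(1/r) := by
    apply Real.rpow_lt_rpow_left_iff (by norm_num : (1:ℝ) < 2) |>.mpr
    have := rpos hr
    positivity
  simpa using h0

lemma qpow_r (hr : 1 ≤ r) (m : ℕ) : (((2:ℝ)^(1/r)) ^ m) ^ r = (2:ℝ) ^ m := by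
  rw [rpow_nat_comm (by positivity : (0:ℝ) ≤ (2:ℝ)^(1/r)) r m,
    ← Real.rpow_mul (by norm_num : (0:ℝ) ≤ 2), one_div,
    inv_mul_cancel₀ (ne_of_gt (rpos hr)), Real.rpow_one]

lemma geom_shift {q : ℝ} (hq : 1 < q) (m : ℕ) :
    ∑ k ∈ Finset.range m, q^(k+1) ≤ q^(m+1) * (1 - q⁻¹)⁻¹ := by
  have hq0 : 0 < q := by linarith
  have hqi : q⁻¹ < 1 := by
    rw [inv_lt_one_iff₀]; right; exact hq
  have hD : 0 < (1 - q⁻¹)⁻¹ := by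
    have : 0 < 1 - q⁻¹ := by linarith
    positivity
  induction m with
  | zero => simp; positivity
  | succ m ih =>
    rw [Finset.sum_range_succ]
    have h1 : q^(m+1) * (1 - q⁻¹)⁻¹ + q^(m+1) ≤ q^(m+2) * (1 - q⁻¹)⁻¹ := by
      have hiq : 0 < 1 - q⁻¹ := by linarith
      rw [← sub_nonneg]
      have e : q^(m+2) * (1 - q⁻¹)⁻¹ - (q^(m+1) * (1 - q⁻¹)⁻¹ + q^(m+1))
          = q^(m+1) * ((q - 1) * (1 - q⁻¹)⁻¹ - 1) := by
        have : q^(m+2) = q^(m+1) * q := by rw [pow_succ]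
        rw [this]; ring
      rw [e]
      apply mul_nonneg (by positivity)
      rw [sub_nonneg, show (q - 1) * (1 - q⁻¹)⁻¹ = (q-1)/(1-q⁻¹) by rw [div_eq_mul_inv],
        le_div_iff₀ hiq, one_mul]
      have hmul := mul_inv_cancel₀ (ne_of_gt hq0)
      nlinarith [sq_nonneg (q-1), inv_pos.mpr hq0]
    calc ∑ k ∈ Finset.range m, q^(k+1) + q^(m+1)
        ≤ q^(m+1) * (1 - q⁻¹)⁻¹ + q^(m+1) := by linarith
      _ ≤ q^(m+2) * (1 - q⁻¹)⁻¹ := h1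

lemma rpow_add_le (hr : 1 ≤ r) {u v : ℝ} (hu : 0 ≤ u) (hv : 0 ≤ v) :
    (u + v) ^ r ≤ (2:ℝ)^r * (u ^ r + v ^ r) := by
  have hm : u + v ≤ 2 * max u v := by
    rcases le_total u v with h | h
    · simp [max_eq_right h]; linarith
    · simp [max_eq_left h]; linarith
  have h0 : (0:ℝ) ≤ max u v := le_max_of_le_left hu
  calc (u + v) ^ r ≤ (2 * max u v) ^ r :=
        Real.rpow_le_rpow (by linarith) hm (by linarith [rpos hr])
    _ = (2:ℝ)^r * (max u v) ^ r := Real.mul_rpow (by norm_num) h0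
    _ ≤ (2:ℝ)^r * (u ^ r + v ^ r) := by
        apply mul_le_mul_of_nonneg_left _ (by positivity)
        rcases le_total u v with h | h
        · rw [max_eq_right h]
          have := Real.rpow_nonneg hu r
          linarith
        · rw [max_eq_left h]
          have := Real.rpow_nonneg hv r
          linarith

noncomputable def DD (r : ℝ) : ℝ := (1 - ((2:ℝ)^(1/r))⁻¹)⁻¹

noncomputable def CC (r : ℝ) : ℝ := (2:ℝ)^r * (2:ℝ)^r * (DD r)^r * 2

lemma DD_pos (hr : 1 ≤ r) : 0 < DD r := by
  have hq := q_gt_one hr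
  have : ((2:ℝ)^(1/r))⁻¹ < 1 := by
    rw [inv_lt_one_iff₀]; right; exact hq
  unfold DD
  have h : 0 < 1 - ((2:ℝ)^(1/r))⁻¹ := by linarith
  positivity

lemma CC_pos (hr : 1 ≤ r) : 0 < CC r := by
  have := DD_pos hr
  unfold CC
  positivity

lemma rpow_div_cancel (hr : 1 ≤ r) {w : ℝ} (hw : 0 ≤ w) : (w ^ (1/r)) ^ r = w := by
  rw [← Real.rpow_mul hw, one_div, inv_mul_cancel₀ (ne_of_gt (rpos hr)), Real.rpow_one]

lemma ppxx_le (hr : 1 ≤ r) (hA : 1 ≤ A) (hN1 : ∀ k, 2 * N k + 1 ≤ N (k+1)) (j : ℕ) :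
    pp j * (xx r A N j) ^ r
      ≤ CC r * (ww r A N 0 * (2⁻¹:ℝ)^((j+1)/2) + ww r A N ((j+1)/2)) := by
  set h := (j+1)/2 with hh
  set q := (2:ℝ)^(1/r) with hqdef
  have hq1 : 1 < q := q_gt_one hr
  have hq0 : 0 < q := by linarith
  set D := DD r with hDdef
  have hD : 0 < D := DD_pos hr
  have hDq : D = (1 - q⁻¹)⁻¹ := rfl
  have hwnn : ∀ k, 0 ≤ ww r A N k := fun k => (ww_pos hA hN1 k).le
  have hwanti := ww_anti hr hA hN1
  set u := (ww r A N 0) ^ (1/r) * (q^(h+1) * D) with hu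
  set v := (ww r A N h) ^ (1/r) * (q^(j+2) * D) with hv
  have hunn : 0 ≤ u := by
    apply mul_nonneg (Real.rpow_nonneg (hwnn 0) _)
    positivity
  have hvnn : 0 ≤ v := by
    apply mul_nonneg (Real.rpow_nonneg (hwnn h) _)
    positivity
  -- part sums
  have hgg : ∀ k, gg r A N k = (ww r A N k) ^ (1/r) * q ^ (k+1) := gg_eq hr hA hN1
  have hS1 : ∑ k ∈ Finset.range h, gg r A N k ≤ u := by
    calc ∑ k ∈ Finset.range h, gg r A N k
        ≤ ∑ k ∈ Finset.range h, (ww r A N 0) ^ (1/r) * q ^ (k+1) := by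
          apply Finset.sum_le_sum
          intro k _
          rw [hgg k]
          apply mul_le_mul_of_nonneg_right _ (by positivity)
          exact Real.rpow_le_rpow (hwnn k) (hwanti (Nat.zero_le k)) (by positivity)
      _ = (ww r A N 0) ^ (1/r) * ∑ k ∈ Finset.range h, q ^ (k+1) := by rw [Finset.mul_sum]
      _ ≤ u := by
          rw [hu]
          apply mul_le_mul_of_nonneg_left _ (Real.rpow_nonneg (hwnn 0) _)
          rw [hDq]
          exact geom_shift hq1 h
  have hS2 : ∑ k ∈ Finset.Ico h (j+1), gg r A N k ≤ v := by
    calc ∑ k ∈ Finset.Ico h (j+1), gg r A N k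
        ≤ ∑ k ∈ Finset.Ico h (j+1), (ww r A N h) ^ (1/r) * q ^ (k+1) := by
          apply Finset.sum_le_sum
          intro k hk
          rw [Finset.mem_Ico] at hk
          rw [hgg k]
          apply mul_le_mul_of_nonneg_right _ (by positivity)
          exact Real.rpow_le_rpow (hwnn k) (hwanti hk.1) (by positivity)
      _ ≤ ∑ k ∈ Finset.range (j+1), (ww r A N h) ^ (1/r) * q ^ (k+1) := by
          apply Finset.sum_le_sum_of_subset_of_nonneg
          · intro k hk
            rw [Finset.mem_Ico] at hk
            simpa using hk.2
          · intro k _ _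
            apply mul_nonneg (Real.rpow_nonneg (hwnn h) _) (by positivity)
      _ = (ww r A N h) ^ (1/r) * ∑ k ∈ Finset.range (j+1), q ^ (k+1) := by rw [Finset.mul_sum]
      _ ≤ v := by
          rw [hv]
          apply mul_le_mul_of_nonneg_left _ (Real.rpow_nonneg (hwnn h) _)
          rw [hDq]
          exact geom_shift hq1 (j+1)
  have hxle : xx r A N j ≤ 2 * (u + v) := by
    have h1 : xx r A N j ≤ 2 * ∑ k ∈ Finset.range (j+1), gg r A N k := by
      rw [xx, uu, Finset.sum_range_succ]
      have := gg_pos (r := r) hA hN1 j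
      linarith
    have h2 : ∑ k ∈ Finset.range (j+1), gg r A N k
        = ∑ k ∈ Finset.range h, gg r A N k + ∑ k ∈ Finset.Ico h (j+1), gg r A N k :=
      (Finset.sum_range_add_sum_Ico _ (by omega)).symm
    rw [h2] at h1
    linarith
  have hxr : (xx r A N j) ^ r ≤ (2:ℝ)^r * ((2:ℝ)^r * (u ^ r + v ^ r)) := by
    calc (xx r A N j) ^ r ≤ (2 * (u + v)) ^ r :=
          Real.rpow_le_rpow (xx_nonneg hA hN1 j) hxle (by linarith [rpos hr])
      _ = (2:ℝ)^r * (u + v) ^ r := Real.mul_rpow (by norm_num) (by linarith)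
      _ ≤ (2:ℝ)^r * ((2:ℝ)^r * (u ^ r + v ^ r)) := by
          apply mul_le_mul_of_nonneg_left (rpow_add_le hr hunn hvnn) (by positivity)
  have hur : u ^ r = ww r A N 0 * ((2:ℝ)^(h+1) * D ^ r) := by
    rw [hu, Real.mul_rpow (Real.rpow_nonneg (hwnn 0) _) (by positivity),
      Real.mul_rpow (by positivity) hD.le, rpow_div_cancel hr (hwnn 0), hqdef, qpow_r hr]
  have hvr : v ^ r = ww r A N h * ((2:ℝ)^(j+2) * D ^ r) := by
    rw [hv, Real.mul_rpow (Real.rpow_nonneg (hwnn h) _) (by positivity),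
      Real.mul_rpow (by positivity) hD.le, rpow_div_cancel hr (hwnn h), hqdef, qpow_r hr]
  -- powers of two
  have hpow1 : (2:ℝ)^(h+1) * (2⁻¹:ℝ)^(j+1) ≤ 2 * (2⁻¹:ℝ)^h := by
    have h2j : (0:ℝ) < 2^(j+1) := by positivity
    have h2h : (0:ℝ) < 2^h := by positivity
    rw [inv_pow, inv_pow, mul_comm ((2:ℝ)^(h+1)) _, ← div_eq_inv_mul, ← div_eq_mul_inv,
      div_le_div_iff₀ h2j h2h]
    calc (2:ℝ)^(h+1) * 2^h = 2^(h+1+h) := (pow_add (2:ℝ) (h+1) h).symm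
      _ ≤ (2:ℝ)^(j+2) := by
          apply pow_le_pow_right₀ (by norm_num)
          omega
      _ = 2 * 2^(j+1) := by rw [pow_succ]; ring
  have hpow2 : (2:ℝ)^(j+2) * (2⁻¹:ℝ)^(j+1) = 2 := by
    rw [inv_pow, pow_succ]
    field_simp
  have hDr : 0 < D ^ r := Real.rpow_pos_of_pos hD r
  have h2r : (0:ℝ) < (2:ℝ)^r := Real.rpow_pos_of_pos (by norm_num) r
  have hppj : pp j = (2⁻¹:ℝ)^(j+1) := rfl
  calc pp j * (xx r A N j) ^ r
      ≤ (2⁻¹:ℝ)^(j+1) * ((2:ℝ)^r * ((2:ℝ)^r * (u ^ r + v ^ r))) := by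
        rw [hppj]
        apply mul_le_mul_of_nonneg_left hxr (by positivity)
    _ = (2:ℝ)^r * (2:ℝ)^r * (D ^ r)
        * (ww r A N 0 * ((2:ℝ)^(h+1) * (2⁻¹:ℝ)^(j+1))
           + ww r A N h * ((2:ℝ)^(j+2) * (2⁻¹:ℝ)^(j+1))) := by
        rw [hur, hvr]; ring
    _ ≤ (2:ℝ)^r * (2:ℝ)^r * (D ^ r)
        * (ww r A N 0 * (2 * (2⁻¹:ℝ)^h) + ww r A N h * 2) := by
        apply mul_le_mul_of_nonneg_left _ (by positivity)
        rw [hpow2]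
        have := mul_le_mul_of_nonneg_left hpow1 (hwnn 0)
        linarith
    _ = CC r * (ww r A N 0 * (2⁻¹:ℝ)^h + ww r A N h) := by
        rw [CC]; ring

lemma mu_moment (hr : 1 ≤ r) (hA : 1 ≤ A) (hN0 : N 0 = 0)
    (hN1 : ∀ k, 2 * N k + 1 ≤ N (k+1)) :
    (∫⁻ x : ℝ, ENNReal.ofReal (|x| ^ r) ∂(mu r A N)) ≠ ⊤ := by
  have heval : (∫⁻ x : ℝ, ENNReal.ofReal (|x| ^ r) ∂(mu r A N))
      = ∑' j : ℕ, ENNReal.ofReal (pp j) * ENNReal.ofReal (|xx r A N j| ^ r) := by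
    rw [mu, lintegral_sum_measure]
    refine tsum_congr (fun j => ?_)
    rw [lintegral_smul_measure, lintegral_dirac, smul_eq_mul]
  rw [heval]
  set F : ℕ → ℝ := fun m => ww r A N 0 * (2⁻¹:ℝ)^m + ww r A N m with hF
  have hFnn : ∀ m, 0 ≤ F m := by
    intro m
    have h1 := ww_pos (r := r) hA hN1 0
    have h2 := ww_pos (r := r) hA hN1 m
    have : (0:ℝ) < (2⁻¹:ℝ)^m := by positivity
    simp only [hF]
    nlinarith
  set CF := ww r A N 0 * 2 + Wtot r A with hCF
  have hFsum : ∀ n, ∑ m ∈ Finset.range n, F m ≤ CF := by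
    intro n
    rw [hF, Finset.sum_add_distrib, ← Finset.mul_sum]
    have h1 : ∑ m ∈ Finset.range n, (2⁻¹:ℝ)^m ≤ 2 :=
      calc ∑ m ∈ Finset.range n, (2⁻¹:ℝ)^m ≤ (1 - 2⁻¹)⁻¹ :=
            geom_le (by norm_num : (0:ℝ) ≤ 2⁻¹) (by norm_num) n
        _ = 2 := by norm_num
    have h2 := ww_partial hr hA hN0 hN1 n
    have h3 := (ww_pos (r := r) hA hN1 0).le
    rw [hCF]
    nlinarith
  have hCFnn : 0 ≤ CF := le_trans (hFnn 0) (by simpa using hFsum 1)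
  have hbound : ∀ j : ℕ, ENNReal.ofReal (pp j) * ENNReal.ofReal (|xx r A N j| ^ r)
      ≤ ENNReal.ofReal (CC r * F ((j+1)/2)) := by
    intro j
    rw [← ENNReal.ofReal_mul (pp_pos j).le, abs_of_nonneg (xx_nonneg hA hN1 j)]
    exact ENNReal.ofReal_le_ofReal (ppxx_le hr hA hN1 j)
  have hfin : (∑' j : ℕ, ENNReal.ofReal (pp j) * ENNReal.ofReal (|xx r A N j| ^ r))
      ≤ ENNReal.ofReal (CC r * (2 * CF)) := by
    calc (∑' j : ℕ, ENNReal.ofReal (pp j) * ENNReal.ofReal (|xx r A N j| ^ r))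
        ≤ ∑' j : ℕ, ENNReal.ofReal (CC r * F ((j+1)/2)) :=
          ENNReal.tsum_le_tsum hbound
      _ ≤ ENNReal.ofReal (CC r * (2 * CF)) := by
          apply tsum_ofReal_le
          · exact fun j => mul_nonneg (CC_pos hr).le (hFnn _)
          · intro n
            rw [← Finset.mul_sum]
            rw [show CC r * (2 * CF) = CC r * (2 * CF) from rfl]
            apply mul_le_mul_of_nonneg_left _ (CC_pos hr).le
            exact sum_half_index F hFnn CF hFsum hCFnn n
  exact ne_top_of_le_ne_top ENNReal.ofReal_ne_top hfin

/-! ### lower bound for finitely supported approximations -/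

noncomputable def near (r A : ℝ) (N : ℕ → ℕ) (y : ℝ) : ℕ :=
  sInf {j | |xx r A N j - y| < gg r A N j}

lemma near_eq (hA : 1 ≤ A) (hN1 : ∀ k, 2 * N k + 1 ≤ N (k+1)) {j : ℕ} {y : ℝ}
    (hy : |xx r A N j - y| < gg r A N j) : near r A N y = j := by
  have hne : {i | |xx r A N i - y| < gg r A N i}.Nonempty := ⟨j, hy⟩
  have hmem := Nat.sInf_mem hne
  set i := near r A N y with hi
  have hmem' : |xx r A N i - y| < gg r A N i := hmem
  have key : ∀ {i₁ i₂ : ℕ}, i₁ < i₂ → |xx r A N i₁ - y| < gg r A N i₁ →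
      |xx r A N i₂ - y| < gg r A N i₂ → False := by
    intro i₁ i₂ h12 h1 h2
    have hsep := xx_sep (r := r) hA hN1 h12
    rw [abs_lt] at h1 h2
    obtain ⟨h1a, h1b⟩ := h1
    obtain ⟨h2a, h2b⟩ := h2
    linarith
  rcases Nat.lt_trichotomy i j with h | h | h
  · exact absurd (key h hmem' hy) (by simp)
  · exact h
  · exact absurd (key h hy hmem') (by simp)

lemma far (hA : 1 ≤ A) (hN1 : ∀ k, 2 * N k + 1 ≤ N (k+1)) (s : Finset ℝ) {j : ℕ}
    (hj : j ∉ s.image (near r A N)) {y : ℝ} (hy : y ∈ s) :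
    gg r A N j ≤ |xx r A N j - y| := by
  by_contra hc
  push_neg at hc
  exact hj (Finset.mem_image.mpr ⟨y, hy, near_eq hA hN1 hc⟩)

/-- the endpoints of the quantile step intervals -/
noncomputable def cc (j : ℕ) : ℝ := 1 - (2⁻¹:ℝ)^j

lemma cc_nonneg (j : ℕ) : 0 ≤ cc j := by
  have := pow_le_one₀ (by norm_num : (0:ℝ) ≤ 2⁻¹) (by norm_num : (2⁻¹:ℝ) ≤ 1) (n := j)
  unfold cc; linarith

lemma cc_lt_one (j : ℕ) : cc j < 1 := by
  have : (0:ℝ) < (2⁻¹:ℝ)^j := by positivity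
  unfold cc; linarith

lemma cc_mono : StrictMono cc := by
  apply strictMono_nat_of_lt_succ
  intro j
  have h : (2⁻¹:ℝ)^(j+1) < (2⁻¹:ℝ)^j := by
    apply pow_lt_pow_right_of_lt_one₀ (by norm_num) (by norm_num)
    omega
  unfold cc; linarith

lemma cc_diff (j : ℕ) : cc (j+1) - cc j = pp j := by
  unfold cc pp
  rw [pow_succ]
  ring

lemma integral_lb (hr : 1 ≤ r) (hA : 1 ≤ A) (hN0 : N 0 = 0)
    (hN1 : ∀ k, 2 * N k + 1 ≤ N (k+1)) (n : ℕ) (s : Finset ℝ) (hsn : s.card ≤ n)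
    (hs : s.Nonempty) (ν : Measure ℝ) [IsProbabilityMeasure ν] (hν : ν ((↑s : Set ℝ)ᶜ) = 0)
    {an : ℝ} (han : 0 ≤ an) (hanle : an ≤ A * (2⁻¹:ℝ)^(KK N n)) :
    ENNReal.ofReal an ≤ drE r ν (mu r A N) := by
  classical
  haveI := mu_prob (r := r) hA hN1
  set k := KK N n with hk
  set M := N (k+2) with hM
  set J := s.image (near r A N) with hJ
  set FS := (Finset.range M) \ J with hFS
  -- real-number estimate
  have hreal : an ^ r ≤ ∑ j ∈ FS, ww r A N j := by
    have hnM : n ≤ M := by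
      have h1 : n < N (k+1) := by rw [hk]; exact KK_lt hN1 n
      have h2 : N (k+1) ≤ N (k+2) := (N_mono hN1).monotone (by omega)
      omega
    have hsplit : ∑ j ∈ Finset.range M ∩ J, ww r A N j + ∑ j ∈ FS, ww r A N j
        = ∑ j ∈ Finset.range M, ww r A N j :=
      Finset.sum_inter_add_sum_sdiff _ _ _
    have hpig : ∑ j ∈ Finset.range M ∩ J, ww r A N j ≤ ∑ i ∈ Finset.range n, ww r A N i := by
      apply pigeon _ (ww_anti hr hA hN1) (fun i => (ww_pos hA hN1 i).le)
      calc (Finset.range M ∩ J).card ≤ J.card := Finset.card_le_card Finset.inter_subset_right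
        _ ≤ s.card := Finset.card_image_le
        _ ≤ n := hsn
    have hrange : ∑ i ∈ Finset.range n, ww r A N i + ∑ j ∈ Finset.Ico n M, ww r A N j
        = ∑ j ∈ Finset.range M, ww r A N j :=
      Finset.sum_range_add_sum_Ico _ hnM
    have hFSge : ∑ j ∈ Finset.Ico n M, ww r A N j ≤ ∑ j ∈ FS, ww r A N j := by linarith
    have hIco : ∑ j ∈ Finset.Ico (N (k+1)) (N (k+2)), ww r A N j
        ≤ ∑ j ∈ Finset.Ico n M, ww r A N j := by
      apply Finset.sum_le_sum_of_subset_of_nonneg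
      · apply Finset.Ico_subset_Ico
        · exact (KK_lt hN1 n).le
        · rw [hM]
      · exact fun i _ _ => (ww_pos hA hN1 i).le
    have hblock : ∑ j ∈ Finset.Ico (N (k+1)) (N (k+2)), ww r A N j
        = (2*A*(2⁻¹:ℝ)^(k+1)) ^ r := by
      rw [show k+2 = k+1+1 from rfl]
      exact sum_block (r := r) (A := A) hN1 (k+1)
    have heq : (2*A*(2⁻¹:ℝ)^(k+1)) ^ r = (A*(2⁻¹:ℝ)^k) ^ r := by
      congr 1
      rw [pow_succ]
      ring
    have hrle : an ^ r ≤ (A*(2⁻¹:ℝ)^k) ^ r :=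
      Real.rpow_le_rpow han hanle (rpos hr).le
    linarith
  -- integral estimate
  set G : ℝ → ℝ≥0∞ :=
    fun t => (ENNReal.ofReal |quantile ν t - quantile (mu r A N) t|) ^ r with hG
  have hIj : ∀ j ∈ FS, ENNReal.ofReal (ww r A N j)
      ≤ ∫⁻ t in Set.Ioo (cc j) (cc (j+1)), G t := by
    intro j hjFS
    have hjJ : j ∉ J := (Finset.mem_sdiff.mp hjFS).2
    have hgpos := gg_pos (r := r) hA hN1 j
    have hGge : ∀ t ∈ Set.Ioo (cc j) (cc (j+1)),
        (ENNReal.ofReal (gg r A N j)) ^ r ≤ G t := by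
      intro t ht
      obtain ⟨ht1, ht2⟩ := ht
      have ht0 : 0 < t := lt_of_le_of_lt (cc_nonneg j) ht1
      have ht1' : t < 1 := lt_trans ht2 (cc_lt_one (j+1))
      have hqmu : quantile (mu r A N) t = xx r A N j :=
        quantile_mu hA hN1 ht1.le ht2
      have hqnu : quantile ν t ∈ s :=
        quantile_mem_of_support ν s hs hν ht0 ht1'
      have habs : gg r A N j ≤ |quantile ν t - quantile (mu r A N) t| := by
        rw [hqmu, abs_sub_comm]
        exact far hA hN1 s hjJ hqnu
      rw [hG]
      exact ENNReal.rpow_le_rpow (ENNReal.ofReal_le_ofReal habs) (rpos hr).le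
    calc ENNReal.ofReal (ww r A N j)
        = (ENNReal.ofReal (gg r A N j)) ^ r * ENNReal.ofReal (pp j) := by
          rw [ENNReal.ofReal_rpow_of_nonneg hgpos.le (rpos hr).le,
            ← ENNReal.ofReal_mul (Real.rpow_nonneg hgpos.le r),
            gg_pow hr hA hN1 j]
      _ = ∫⁻ _ in Set.Ioo (cc j) (cc (j+1)), (ENNReal.ofReal (gg r A N j)) ^ r := by
          rw [setLIntegral_const, Real.volume_Ioo, cc_diff]
      _ ≤ ∫⁻ t in Set.Ioo (cc j) (cc (j+1)), G t :=
          setLIntegral_mono' measurableSet_Ioo hGge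
  have hdisj : Set.PairwiseDisjoint (↑FS : Set ℕ) (fun j => Set.Ioo (cc j) (cc (j+1))) := by
    intro i _ j _ hij
    apply Set.disjoint_left.mpr
    intro x hxi hxj
    rcases Nat.lt_or_ge i j with h | h
    · have : cc (i+1) ≤ cc j := cc_mono.monotone h
      exact absurd (lt_of_lt_of_le hxi.2 this) (not_lt.mpr hxj.1.le)
    · have h' : j < i := lt_of_le_of_ne h (Ne.symm hij)
      have : cc (j+1) ≤ cc i := cc_mono.monotone h'
      exact absurd (lt_of_lt_of_le hxj.2 this) (not_lt.mpr hxi.1.le)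
  have hsub : (⋃ j ∈ FS, Set.Ioo (cc j) (cc (j+1))) ⊆ Set.Ioo (0:ℝ) 1 := by
    intro x hx
    simp only [Set.mem_iUnion] at hx
    obtain ⟨j, _, hj2⟩ := hx
    exact ⟨lt_of_le_of_lt (cc_nonneg j) hj2.1, lt_trans hj2.2 (cc_lt_one (j+1))⟩
  have hint : ENNReal.ofReal (an ^ r) ≤ ∫⁻ t in Set.Ioo (0:ℝ) 1, G t := by
    calc ENNReal.ofReal (an ^ r) ≤ ENNReal.ofReal (∑ j ∈ FS, ww r A N j) :=
          ENNReal.ofReal_le_ofReal hreal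
      _ = ∑ j ∈ FS, ENNReal.ofReal (ww r A N j) :=
          ENNReal.ofReal_sum_of_nonneg (fun j _ => (ww_pos hA hN1 j).le)
      _ ≤ ∑ j ∈ FS, ∫⁻ t in Set.Ioo (cc j) (cc (j+1)), G t := Finset.sum_le_sum hIj
      _ = ∫⁻ t in ⋃ j ∈ FS, Set.Ioo (cc j) (cc (j+1)), G t :=
          (lintegral_biUnion_finset hdisj (fun j _ => measurableSet_Ioo) G).symm
      _ ≤ ∫⁻ t in Set.Ioo (0:ℝ) 1, G t := lintegral_mono_set hsub
  -- conclude
  have hfinal : (ENNReal.ofReal (an ^ r)) ^ (1/r) ≤ drE r ν (mu r A N) := by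
    rw [drE]
    exact ENNReal.rpow_le_rpow hint (by have := rpos hr; positivity)
  calc ENNReal.ofReal an
      = (ENNReal.ofReal (an ^ r)) ^ (1/r) := by
        rw [← ENNReal.ofReal_rpow_of_nonneg han (rpos hr).le, ← ENNReal.rpow_mul,
          mul_one_div, div_self (ne_of_gt (rpos hr)), ENNReal.rpow_one]
    _ ≤ drE r ν (mu r A N) := hfinal

end Construction
end Stmt19X

open Stmt19X in
theorem stmt19 (r : ℝ) (hr : 1 ≤ r) (a : ℕ → ℝ) (ha : ∀ n, 0 ≤ a n)
    (hlim : Tendsto a atTop (nhds 0)) :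
    ∃ μ : Measure ℝ, IsProbabilityMeasure μ ∧
      (∫⁻ x : ℝ, ENNReal.ofReal (|x| ^ r) ∂μ) ≠ ⊤ ∧
      ∀ n : ℕ, ∀ ν : Measure ℝ, IsProbabilityMeasure ν →
        (∃ s : Finset ℝ, s.card ≤ n ∧ ν ((↑s : Set ℝ)ᶜ) = 0) →
        ENNReal.ofReal (a n) ≤ drE r ν μ := by
  have hbdd : BddAbove (Set.range a) := hlim.bddAbove_range
  set A := max 1 (sSup (Set.range a)) with hAdef
  have hA1 : 1 ≤ A := le_max_left _ _
  have haA : ∀ n, a n ≤ A := fun n =>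
    le_trans (le_csSup hbdd ⟨n, rfl⟩) (le_max_right _ _)
  have hMM : ∀ k : ℕ, ∃ M : ℕ, ∀ m, M ≤ m → a m ≤ A * (2⁻¹:ℝ)^k := by
    intro k
    have hε : (0:ℝ) < A * (2⁻¹:ℝ)^k := by positivity
    have hev : ∀ᶠ m in atTop, a m < A * (2⁻¹:ℝ)^k := hlim.eventually_lt_const hε
    obtain ⟨M, hM⟩ := Filter.eventually_atTop.mp hev
    exact ⟨M, fun m hm => (hM m hm).le⟩
  choose MM hMMspec using hMM
  let N : ℕ → ℕ := fun k => Nat.rec 0 (fun k' Nk => max (MM (k'+1)) (2*Nk + 1)) k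
  have hN0 : N 0 = 0 := rfl
  have hNsucc : ∀ k, N (k+1) = max (MM (k+1)) (2*(N k)+1) := fun k => rfl
  have hN1 : ∀ k, 2 * N k + 1 ≤ N (k+1) := fun k => by
    rw [hNsucc]; exact le_max_right _ _
  have hN2 : ∀ k m, N k ≤ m → a m ≤ A * (2⁻¹:ℝ)^k := by
    intro k m hm
    cases k with
    | zero => simpa using haA m
    | succ k =>
      apply hMMspec (k+1) m
      have h1 : MM (k+1) ≤ N (k+1) := by rw [hNsucc]; exact le_max_left _ _
      omega
  refine ⟨mu r A N, mu_prob hA1 hN1, mu_moment hr hA1 hN0 hN1, ?_⟩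
  intro n ν hνP hsupp
  obtain ⟨s, hsn, hνs⟩ := hsupp
  haveI := hνP
  by_cases hse : s.Nonempty
  · exact integral_lb hr hA1 hN0 hN1 n s hsn hse ν hνs (ha n)
      (hN2 (KK N n) n (KK_le hN0 n))
  · exfalso
    rw [Finset.not_nonempty_iff_eq_empty] at hse
    subst hse
    have h0 : ν Set.univ = 0 := by simpa using hνs
    have h1 : ν Set.univ = 1 := measure_univ
    rw [h0] at h1
    exact zero_ne_one h1
end
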